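/- arXiv:2511.20466 — 6 statements merged into one kernel-verified Lean document; each statement's English description precedes it below -/
import Mathlib

section
/- Let Θ ⊂ (0,1) × (0,∞) be compact, let k ≥ 1, and let z₁, …, z_k ∈ (0,∞). Suppose θ* = (γ*, σ*) lies in the interior of Θ and is a local minimizer over Θ of the map θ = (γ,σ) ↦ ∫₀^∞ ( k⁻¹ Σ_{j=1}^k 1{z_j > x} − S_{γ,σ}(x) )² dx. Then k⁻¹ Σ_{j=1}^k ψ_γ(z_j; γ*, σ*) = 0 and k⁻¹ Σ_{j=1}^k ψ_σ(z_j; γ*, σ*) = 0. -/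
open Real MeasureTheory

/-- Survival function of the generalized Pareto distribution GPD(γ,σ). -/
noncomputable def gpdSurvival (γ σ x : ℝ) : ℝ := (1 + γ * x / σ) ^ (-1 / γ : ℝ)

/-- The γ-component of the estimating function ψ. -/
noncomputable def psiGamma (γ σ x : ℝ) : ℝ :=
  σ / (2 * (γ - 2) ^ 2) +
    ((γ - 1) ^ 2 * γ ^ 2)⁻¹ *
      (-(γ ^ 2 * σ) +
        (σ / (σ + γ * x)) ^ (1 / γ : ℝ) *
          (γ * (γ * σ + (2 * γ - 1) * x) -
            (γ - 1) * (σ + γ * x) * Real.log (1 + γ * x / σ)))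

/-- The σ-component of the estimating function ψ. -/
noncomputable def psiSigma (γ σ x : ℝ) : ℝ :=
  -(1 / (2 * (γ - 2))) -
    ((γ - 1) * σ)⁻¹ * ((σ + x) * (σ / (σ + γ * x)) ^ (1 / γ : ℝ) - σ)

lemma keyGamma {γ σ z : ℝ} (hγ0 : 0 < γ) (hγ1 : γ < 1) (hσ : 0 < σ) (hz : 0 < z) :
    HasDerivAt (fun a : ℝ =>
      σ / (2 * (2 - a)) - σ / (a - 1) * ((1 + a * z / σ) ^ ((a - 1) / a : ℝ) - 1))
      (psiGamma γ σ z) γ := by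
  have hγ : γ ≠ 0 := ne_of_gt hγ0
  have hγ1' : γ - 1 ≠ 0 := by intro h; nlinarith [h]
  have h2γ : (2 : ℝ) * (2 - γ) ≠ 0 := by nlinarith
  have hγ2 : γ - 2 ≠ 0 := by nlinarith
  have hσ' : σ ≠ 0 := ne_of_gt hσ
  have hw : (0:ℝ) < 1 + γ * z / σ := by positivity
  have hσγz : (0:ℝ) < σ + γ * z := by positivity
  have h1 : HasDerivAt (fun a : ℝ => 1 + a * z / σ) (z / σ) γ := by
    simpa [mul_div_assoc] using ((hasDerivAt_id γ).mul_const (z / σ)).const_add 1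
  have h2 : HasDerivAt (fun a : ℝ => (a - 1) / a) ((1 * γ - (γ - 1) * 1) / γ ^ 2) γ :=
    ((hasDerivAt_id γ).sub_const 1).div (hasDerivAt_id γ) hγ
  have h3 := h1.rpow h2 (by simpa using hw)
  have h4 : HasDerivAt (fun a : ℝ => σ / (a - 1)) ((0 * (γ - 1) - σ * 1) / (γ - 1) ^ 2) γ :=
    (hasDerivAt_const γ σ).div ((hasDerivAt_id γ).sub_const 1) hγ1'
  have h5 := h4.mul (h3.sub_const 1)
  have h6d : HasDerivAt (fun a : ℝ => 2 * (2 - a)) (2 * -1) γ :=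
    ((hasDerivAt_id γ).const_sub 2).const_mul 2
  have h6 : HasDerivAt (fun a : ℝ => σ / (2 * (2 - a)))
      ((0 * (2 * (2 - γ)) - σ * (2 * -1)) / (2 * (2 - γ)) ^ 2) γ :=
    (hasDerivAt_const γ σ).div h6d h2γ
  have hmain := h6.sub h5
  convert hmain using 1
  · rfl
  · rfl
  · rfl

  have hB : (σ / (σ + γ * z)) ^ (1 / γ : ℝ) = (1 + γ * z / σ) ^ (-(1 / γ) : ℝ) := by
    rw [Real.rpow_neg hw.le, ← Real.inv_rpow hw.le]
    congr 1
    field_simp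
  have he1 : (γ - 1) / γ - 1 = -(1/γ) := by field_simp; ring
  have he2 : (1 + γ * z / σ) ^ ((γ - 1) / γ : ℝ)
      = (1 + γ * z / σ) * (1 + γ * z / σ) ^ (-(1/γ) : ℝ) := by
    rw [show (γ - 1) / γ = 1 + -(1/γ) by field_simp; ring, Real.rpow_add hw, Real.rpow_one]
  rw [psiGamma, hB, he1, he2]
  set B := (1 + γ * z / σ) ^ (-(1/γ) : ℝ) with hBdef
  set L := Real.log (1 + γ * z / σ) with hLdef
  have h2g' : (2:ℝ) - γ ≠ 0 := by intro h; linarith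
  field_simp
  ring

open Set Filter in
lemma keySigma {γ σ z : ℝ} (hγ0 : 0 < γ) (hγ1 : γ < 1) (hσ : 0 < σ) (hz : 0 < z) :
    HasDerivAt (fun s : ℝ =>
      s / (2 * (2 - γ)) - s / (γ - 1) * ((1 + γ * z / s) ^ ((γ - 1) / γ : ℝ) - 1))
      (psiSigma γ σ z) σ := by
  have hγ : γ ≠ 0 := ne_of_gt hγ0
  have hγ1' : γ - 1 ≠ 0 := by intro h; nlinarith [h]
  have h2γ : (2 : ℝ) * (2 - γ) ≠ 0 := by nlinarith
  have hγ2 : γ - 2 ≠ 0 := by nlinarith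
  have hσ' : σ ≠ 0 := ne_of_gt hσ
  have hw : (0:ℝ) < 1 + γ * z / σ := by positivity
  have hσγz : (0:ℝ) < σ + γ * z := by positivity
  have hbase : HasDerivAt (fun s : ℝ => 1 + γ * z / s) (γ * z * -(σ ^ 2)⁻¹) σ := by
    simpa [div_eq_mul_inv] using ((hasDerivAt_inv hσ').const_mul (γ * z)).const_add 1
  have h3 := hbase.rpow_const (p := (γ - 1) / γ) (Or.inl (ne_of_gt hw))
  have h4 : HasDerivAt (fun s : ℝ => s / (γ - 1)) (1 / (γ - 1)) σ :=
    (hasDerivAt_id σ).div_const (γ - 1)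
  have h5 := h4.mul (h3.sub_const 1)
  have hA : HasDerivAt (fun s : ℝ => s / (2 * (2 - γ))) (1 / (2 * (2 - γ))) σ :=
    (hasDerivAt_id σ).div_const (2 * (2 - γ))
  have hmain := hA.sub h5
  convert hmain using 1
  · rfl
  · rfl
  · rfl
  have hB : (σ / (σ + γ * z)) ^ (1 / γ : ℝ) = (1 + γ * z / σ) ^ (-(1 / γ) : ℝ) := by
    rw [Real.rpow_neg hw.le, ← Real.inv_rpow hw.le]
    congr 1
    field_simp
  have he1 : (γ - 1) / γ - 1 = -(1/γ) := by field_simp; ring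
  have he2 : (1 + γ * z / σ) ^ ((γ - 1) / γ : ℝ)
      = (1 + γ * z / σ) * (1 + γ * z / σ) ^ (-(1/γ) : ℝ) := by
    rw [show (γ - 1) / γ = 1 + -(1/γ) by field_simp; ring, Real.rpow_add hw, Real.rpow_one]
  rw [psiSigma, hB, he1, he2]
  set B := (1 + γ * z / σ) ^ (-(1/γ) : ℝ) with hBdef
  set L := Real.log (1 + γ * z / σ) with hLdef
  have h2g' : (2:ℝ) - γ ≠ 0 := by intro h; linarith
  field_simp
  ring

section helpers
open Set Filter
lemma integral_surv_Ioo {a s : ℝ} (ha0 : 0 < a) (ha1 : a < 1) (hs : 0 < s) {z : ℝ} (hz : 0 < z) :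
    ∫ x in Set.Ioo (0:ℝ) z, (1 + a * x / s) ^ (-1/a : ℝ)
      = s / (a - 1) * ((1 + a * z / s) ^ ((a - 1) / a : ℝ) - 1) := by
  have ha : a ≠ 0 := ne_of_gt ha0
  have ha1' : a - 1 ≠ 0 := by intro h; nlinarith
  have hs' : s ≠ 0 := ne_of_gt hs
  have hderiv : ∀ x ∈ Set.uIcc (0:ℝ) z,
      HasDerivAt (fun x : ℝ => s/(a-1) * (1 + a*x/s) ^ ((a-1)/a : ℝ))
        ((1 + a*x/s) ^ (-1/a : ℝ)) x := by
    intro x hx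
    rw [Set.uIcc_of_le hz.le] at hx
    have hx0 : 0 ≤ x := hx.1
    have hw : (0:ℝ) < 1 + a*x/s := by positivity
    have hb : HasDerivAt (fun x : ℝ => 1 + a*x/s) (a * 1 / s) x := by
      simpa using (((hasDerivAt_id x).const_mul a).div_const s).const_add 1
    have := (hb.rpow_const (p := (a-1)/a) (Or.inl hw.ne')).const_mul (s/(a-1))
    convert this using 1
    · rfl
    · rfl
    rw [show ((a-1)/a - 1 : ℝ) = -1/a by field_simp; ring]
    field_simp
  have hcont : ContinuousOn (fun x : ℝ => (1 + a*x/s) ^ (-1/a : ℝ)) (Set.uIcc 0 z) := by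
    apply ContinuousOn.rpow_const (by fun_prop)
    intro x hx
    rw [Set.uIcc_of_le hz.le] at hx
    have hw : (0:ℝ) < 1 + a*x/s := by have := hx.1; positivity
    exact Or.inl hw.ne'
  have hFTC := intervalIntegral.integral_eq_sub_of_hasDerivAt hderiv hcont.intervalIntegrable
  rw [intervalIntegral.integral_of_le hz.le] at hFTC
  rw [← MeasureTheory.integral_Ioc_eq_integral_Ioo, hFTC]
  norm_num
  ring

lemma integrableOn_surv_sq {a s : ℝ} (ha0 : 0 < a) (ha1 : a < 1) (hs : 0 < s) :
    MeasureTheory.IntegrableOn (fun x : ℝ => (1 + a * x / s) ^ (-2/a : ℝ)) (Set.Ioi 0) := by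
  have ha : a ≠ 0 := ne_of_gt ha0
  have hq : (-2/a : ℝ) < -1 := by
    have h1 : (1:ℝ) < 2/a := by rw [lt_div_iff₀ ha0]; linarith
    have : (-2/a : ℝ) = -(2/a) := by ring
    rw [this]; linarith
  have hcont : ∀ t : Set ℝ, t ⊆ Set.Ici 0 →
      ContinuousOn (fun x : ℝ => (1 + a * x / s) ^ (-2/a : ℝ)) t := by
    intro t ht
    apply ContinuousOn.rpow_const (by fun_prop)
    intro x hx
    have hx0 : (0:ℝ) ≤ x := ht hx
    have hw : (0:ℝ) < 1 + a*x/s := by positivity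
    exact Or.inl hw.ne'
  rw [show Set.Ioi (0:ℝ) = Set.Ioc 0 1 ∪ Set.Ioi 1 from (Set.Ioc_union_Ioi_eq_Ioi zero_le_one).symm]
  apply MeasureTheory.IntegrableOn.union
  · exact ((hcont _ (Set.Icc_subset_Ici_self : Set.Icc (0:ℝ) 1 ⊆ Set.Ici 0)).integrableOn_Icc).mono_set
      Set.Ioc_subset_Icc_self
  · have hg : MeasureTheory.IntegrableOn
        (fun x : ℝ => (a/s)^(-2/a : ℝ) * x ^ (-2/a : ℝ)) (Set.Ioi 1) :=
      (integrableOn_Ioi_rpow_of_lt hq one_pos).const_mul _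
    apply MeasureTheory.Integrable.mono hg ((hcont (Set.Ioi 1) (fun x hx => le_of_lt (lt_of_lt_of_le one_pos (le_of_lt (Set.mem_Ioi.mp hx))))).aestronglyMeasurable measurableSet_Ioi)
    filter_upwards [MeasureTheory.ae_restrict_mem measurableSet_Ioi] with x hx
    have hx1 : (1:ℝ) ≤ x := le_of_lt hx
    have hx0 : (0:ℝ) < x := lt_of_lt_of_le one_pos hx1
    have hw : (0:ℝ) < 1 + a*x/s := by positivity
    have hax : (0:ℝ) < a/s * x := by positivity
    have hle : a/s * x ≤ 1 + a*x/s := by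
      have : a/s * x = a*x/s := by ring
      rw [this]; linarith
    have h1 : (1 + a*x/s) ^ (-2/a : ℝ) ≤ (a/s * x) ^ (-2/a : ℝ) :=
      Real.rpow_le_rpow_of_nonpos hax hle (by linarith)
    have h2 : (a/s * x) ^ (-2/a : ℝ) = (a/s)^(-2/a : ℝ) * x ^ (-2/a : ℝ) :=
      Real.mul_rpow (by positivity) (le_of_lt hx0)
    rw [Real.norm_eq_abs, Real.norm_eq_abs, abs_of_nonneg (Real.rpow_nonneg hw.le _),
      abs_of_nonneg (by positivity)]
    rw [← h2]; exact h1

lemma integral_surv_sq {a s : ℝ} (ha0 : 0 < a) (ha1 : a < 1) (hs : 0 < s) :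
    ∫ x in Set.Ioi (0:ℝ), (1 + a * x / s) ^ (-2/a : ℝ) = s / (2 - a) := by
  have ha : a ≠ 0 := ne_of_gt ha0
  have ha2 : a - 2 ≠ 0 := by intro h; nlinarith
  have hs' : s ≠ 0 := ne_of_gt hs
  have hderiv : ∀ x ∈ Set.Ici (0:ℝ),
      HasDerivAt (fun x : ℝ => s/(a-2) * (1 + a*x/s) ^ ((a-2)/a : ℝ))
        ((1 + a*x/s) ^ (-2/a : ℝ)) x := by
    intro x hx0
    have hw : (0:ℝ) < 1 + a*x/s := by have : (0:ℝ) ≤ x := hx0; positivity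
    have hb : HasDerivAt (fun x : ℝ => 1 + a*x/s) (a * 1 / s) x := by
      simpa using (((hasDerivAt_id x).const_mul a).div_const s).const_add 1
    have := (hb.rpow_const (p := (a-2)/a) (Or.inl hw.ne')).const_mul (s/(a-2))
    convert this using 1
    · rfl
    · rfl
    rw [show ((a-2)/a - 1 : ℝ) = -2/a by field_simp; ring]
    field_simp
  have htend : Filter.Tendsto (fun x : ℝ => s/(a-2) * (1 + a*x/s) ^ ((a-2)/a : ℝ))
      Filter.atTop (nhds 0) := by
    have h1 : Filter.Tendsto (fun x : ℝ => 1 + a*x/s) Filter.atTop Filter.atTop := by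
      apply Filter.tendsto_atTop_add_const_left
      exact (Filter.Tendsto.const_mul_atTop ha0 Filter.tendsto_id).atTop_div_const hs
    have h2 : Filter.Tendsto (fun y : ℝ => y ^ ((a-2)/a : ℝ)) Filter.atTop (nhds 0) := by
      rw [show ((a-2)/a : ℝ) = -((2-a)/a) by ring]
      exact tendsto_rpow_neg_atTop (div_pos (by linarith) ha0)
    simpa using (h2.comp h1).const_mul (s/(a-2))
  have := MeasureTheory.integral_Ioi_of_hasDerivAt_of_tendsto'
    (fun x hx => hderiv x hx) (integrableOn_surv_sq ha0 ha1 hs) htend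
  rw [this]
  have h2a : (2:ℝ) - a ≠ 0 := by intro h; nlinarith
  norm_num
  field_simp
  ring

lemma L2_decomp {a s : ℝ} (ha0 : 0 < a) (ha1 : a < 1) (hs : 0 < s)
    (k : ℕ) (hk : 1 ≤ k) (z : Fin k → ℝ) (hz : ∀ j, 0 < z j) :
    ∫ x in Set.Ioi (0:ℝ),
        ((k : ℝ)⁻¹ * ∑ j, (if x < z j then (1 : ℝ) else 0) - gpdSurvival a s x) ^ 2
      = (∫ x in Set.Ioi (0:ℝ), ((k : ℝ)⁻¹ * ∑ j, (if x < z j then (1 : ℝ) else 0)) ^ 2)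
        + 2 * (s / (2 * (2 - a))
            - (k : ℝ)⁻¹ * ∑ j, s / (a - 1) * ((1 + a * z j / s) ^ ((a - 1) / a : ℝ) - 1)) := by
  have ha : a ≠ 0 := ne_of_gt ha0
  set S : ℝ → ℝ := fun x => (1 + a * x / s) ^ (-1 / a : ℝ) with hSdef
  set E : ℝ → ℝ := fun x => (k : ℝ)⁻¹ * ∑ j, (if x < z j then (1 : ℝ) else 0) with hEdef
  have hSeq : gpdSurvival a s = S := rfl
  -- basic facts about S
  have hSpos : ∀ x : ℝ, 0 ≤ x → 0 < 1 + a * x / s := fun x hx => by positivity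
  have hS_le_one : ∀ x : ℝ, 0 ≤ x → S x ≤ 1 := by
    intro x hx
    apply Real.rpow_le_one_of_one_le_of_nonpos
    · have : 0 ≤ a * x / s := by positivity
      linarith
    · rw [neg_div]
      simp only [Left.neg_nonpos_iff]
      positivity
  have hS_nonneg : ∀ x : ℝ, 0 ≤ x → 0 ≤ S x := fun x hx => Real.rpow_nonneg (hSpos x hx).le _
  have hS_meas : AEStronglyMeasurable S (volume.restrict (Set.Ioi 0)) := by
    apply ContinuousOn.aestronglyMeasurable _ measurableSet_Ioi
    apply ContinuousOn.rpow_const (by fun_prop)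
    intro x hx
    exact Or.inl (hSpos x (le_of_lt hx)).ne'
  -- indicator integrability
  have hind_eq : ∀ j : Fin k, (fun x : ℝ => if x < z j then (1:ℝ) else 0)
      = (Set.Iio (z j)).indicator (fun _ => (1:ℝ)) := by
    intro j; funext x; simp [Set.indicator_apply]
  have hind_int : ∀ j : Fin k,
      IntegrableOn (fun x : ℝ => if x < z j then (1:ℝ) else 0) (Set.Ioi 0) := by
    intro j
    rw [hind_eq j]
    rw [IntegrableOn, integrable_indicator_iff measurableSet_Iio]
    rw [IntegrableOn, Measure.restrict_restrict measurableSet_Iio]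
    apply integrable_const_iff.mpr
    right
    refine ⟨?_⟩
    rw [Measure.restrict_apply MeasurableSet.univ, Set.univ_inter,
      Set.Iio_inter_Ioi, Real.volume_Ioo]
    exact ENNReal.ofReal_lt_top
  have hind_meas : ∀ j : Fin k, Measurable (fun x : ℝ => if x < z j then (1:ℝ) else 0) := by
    intro j
    exact Measurable.ite (measurableSet_lt measurable_id measurable_const)
      measurable_const measurable_const
  have hE_meas : Measurable E := by
    apply Measurable.const_mul
    exact Finset.measurable_sum _ (fun j _ => hind_meas j)
  have hE_int : IntegrableOn E (Set.Ioi 0) :=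
    (integrable_finset_sum _ (fun j _ => hind_int j)).const_mul _
  have hE_nonneg : ∀ x, 0 ≤ E x := by
    intro x
    apply mul_nonneg (by positivity)
    apply Finset.sum_nonneg
    intro j _
    split_ifs <;> norm_num
  have hE_le_one : ∀ x, E x ≤ 1 := by
    intro x
    have h1 : (∑ j, (if x < z j then (1:ℝ) else 0)) ≤ k := by
      calc (∑ j, (if x < z j then (1:ℝ) else 0)) ≤ ∑ _j : Fin k, (1:ℝ) := by
            apply Finset.sum_le_sum; intro j _; split_ifs <;> norm_num
        _ = k := by simp
    have hkpos : (0:ℝ) < k := by positivity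
    rw [hEdef]
    calc (k:ℝ)⁻¹ * ∑ j, (if x < z j then (1:ℝ) else 0) ≤ (k:ℝ)⁻¹ * k := by
          apply mul_le_mul_of_nonneg_left h1 (by positivity)
      _ = 1 := inv_mul_cancel₀ (ne_of_gt hkpos)
  -- integrability of E^2, E*S, S^2
  have hE2_int : IntegrableOn (fun x => E x ^ 2) (Set.Ioi 0) := by
    apply Integrable.mono hE_int ((hE_meas.pow_const 2).aestronglyMeasurable)
    filter_upwards with x
    rw [Real.norm_eq_abs, Real.norm_eq_abs, abs_of_nonneg (by positivity),
      abs_of_nonneg (hE_nonneg x)]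
    nlinarith [hE_nonneg x, hE_le_one x]
  have hES_int : IntegrableOn (fun x => E x * S x) (Set.Ioi 0) := by
    apply Integrable.mono hE_int (hE_meas.aestronglyMeasurable.mul hS_meas)
    filter_upwards [MeasureTheory.ae_restrict_mem measurableSet_Ioi] with x hx
    simp only [Pi.mul_apply]
    rw [Real.norm_eq_abs, Real.norm_eq_abs,
      abs_of_nonneg (mul_nonneg (hE_nonneg x) (hS_nonneg x (le_of_lt hx))),
      abs_of_nonneg (hE_nonneg x)]
    nlinarith [hE_nonneg x, hS_nonneg x (le_of_lt hx), hS_le_one x (le_of_lt hx)]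
  have hS2_int : IntegrableOn (fun x => S x ^ 2) (Set.Ioi 0) := by
    apply (integrableOn_surv_sq ha0 ha1 hs).congr_fun _ measurableSet_Ioi
    intro x hx
    rw [hSdef]
    simp only
    rw [pow_two, ← Real.rpow_add (hSpos x (le_of_lt hx))]
    congr 1
    ring
  have hS2_val : ∫ x in Set.Ioi (0:ℝ), S x ^ 2 = s / (2 - a) := by
    rw [← integral_surv_sq ha0 ha1 hs]
    apply setIntegral_congr_fun measurableSet_Ioi
    intro x hx
    rw [hSdef]
    simp only
    rw [pow_two, ← Real.rpow_add (hSpos x (le_of_lt hx))]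
    congr 1
    ring
  -- E*S integral
  have hindS_int : ∀ j : Fin k,
      IntegrableOn (fun x : ℝ => (if x < z j then (1:ℝ) else 0) * S x) (Set.Ioi 0) := by
    intro j
    apply Integrable.mono (hind_int j) (((hind_meas j).aestronglyMeasurable).mul hS_meas)
    filter_upwards [MeasureTheory.ae_restrict_mem measurableSet_Ioi] with x hx
    simp only [Pi.mul_apply]
    rw [Real.norm_eq_abs, Real.norm_eq_abs]
    split_ifs with h
    · rw [one_mul, abs_of_nonneg (hS_nonneg x (le_of_lt hx)), abs_one]
      exact hS_le_one x (le_of_lt hx)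
    · simp
  have hindS_val : ∀ j : Fin k,
      ∫ x in Set.Ioi (0:ℝ), (if x < z j then (1:ℝ) else 0) * S x
        = s / (a - 1) * ((1 + a * z j / s) ^ ((a - 1) / a : ℝ) - 1) := by
    intro j
    have h1 : ∀ x : ℝ, (if x < z j then (1:ℝ) else 0) * S x = (Set.Iio (z j)).indicator S x := by
      intro x
      simp only [Set.indicator_apply, Set.mem_Iio]
      split_ifs <;> simp
    simp_rw [h1]
    rw [MeasureTheory.setIntegral_indicator measurableSet_Iio, Set.Ioi_inter_Iio]
    rw [← integral_surv_Ioo ha0 ha1 hs (hz j)]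
  have hES_val : ∫ x in Set.Ioi (0:ℝ), E x * S x
      = (k:ℝ)⁻¹ * ∑ j, s / (a - 1) * ((1 + a * z j / s) ^ ((a - 1) / a : ℝ) - 1) := by
    have h1 : ∀ x : ℝ, E x * S x = (k:ℝ)⁻¹ * ∑ j, (if x < z j then (1:ℝ) else 0) * S x := by
      intro x
      rw [hEdef]
      simp only
      rw [mul_assoc, Finset.sum_mul]
    simp_rw [h1]
    rw [MeasureTheory.integral_const_mul, MeasureTheory.integral_finset_sum _ (fun j _ => hindS_int j)]
    congr 1
    exact Finset.sum_congr rfl (fun j _ => hindS_val j)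
  -- put it together
  have hsplit : ∀ x : ℝ, (E x - gpdSurvival a s x) ^ 2
      = (E x ^ 2 - 2 * (E x * S x)) + S x ^ 2 := by
    intro x; rw [hSeq]; ring
  calc ∫ x in Set.Ioi (0:ℝ), (E x - gpdSurvival a s x) ^ 2
      = ∫ x in Set.Ioi (0:ℝ), ((E x ^ 2 - 2 * (E x * S x)) + S x ^ 2) := by
        apply integral_congr_ae
        filter_upwards with x
        exact hsplit x
    _ = _ := by
        have h2ES : IntegrableOn (fun x => 2 * (E x * S x)) (Set.Ioi 0) :=
          hES_int.const_mul 2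
        have h12 : IntegrableOn (fun x => E x ^ 2 - 2 * (E x * S x)) (Set.Ioi 0) :=
          hE2_int.sub h2ES
        rw [integral_add h12 hS2_int, integral_sub hE2_int h2ES,
          MeasureTheory.integral_const_mul, hES_val, hS2_val]
        have hI : (∫ x in Set.Ioi (0:ℝ), ((k : ℝ)⁻¹ * ∑ j, (if x < z j then (1 : ℝ) else 0)) ^ 2)
            = ∫ x in Set.Ioi (0:ℝ), E x ^ 2 := rfl
        rw [hI]
        have h2a : (2:ℝ) - a ≠ 0 := by intro h; nlinarith
        have hhalf : s / (2 - a) = 2 * (s / (2 * (2 - a))) := by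
          field_simp
        linarith [hhalf]

end helpers

/-- any interior local minimizer over a compact `Θ ⊆ (0,1) × (0,∞)` of the
`L²`-distance between the empirical survival function of `z₁,…,z_k` and the GPD survival
function is a zero of the estimating equations. -/
theorem mde_is_z_estimator (Θ : Set (ℝ × ℝ)) (hΘsub : Θ ⊆ Set.Ioo (0 : ℝ) 1 ×ˢ Set.Ioi (0 : ℝ))
    (hΘcomp : IsCompact Θ) (k : ℕ) (hk : 1 ≤ k) (z : Fin k → ℝ) (hz : ∀ j, 0 < z j)
    (θs : ℝ × ℝ) (hθint : θs ∈ interior Θ)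
    (hmin : IsLocalMinOn
      (fun θ : ℝ × ℝ => ∫ x in Set.Ioi (0 : ℝ),
        ((k : ℝ)⁻¹ * ∑ j, (if x < z j then (1 : ℝ) else 0) - gpdSurvival θ.1 θ.2 x) ^ 2)
      Θ θs) :
    (k : ℝ)⁻¹ * ∑ j, psiGamma θs.1 θs.2 (z j) = 0 ∧
    (k : ℝ)⁻¹ * ∑ j, psiSigma θs.1 θs.2 (z j) = 0 := by
  have hθmem := hΘsub (interior_subset hθint)
  have hγ0 : 0 < θs.1 := hθmem.1.1
  have hγ1 : θs.1 < 1 := hθmem.1.2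
  have hσ : 0 < θs.2 := hθmem.2
  have hkR : ((k : ℝ)) ≠ 0 := Nat.cast_ne_zero.mpr (by omega)
  set M : ℝ × ℝ → ℝ := fun θ => ∫ x in Set.Ioi (0 : ℝ),
      ((k : ℝ)⁻¹ * ∑ j, (if x < z j then (1 : ℝ) else 0) - gpdSurvival θ.1 θ.2 x) ^ 2 with hM
  have hlocM : IsLocalMin M θs := hmin.isLocalMin (mem_interior_iff_mem_nhds.mp hθint)
  set C : ℝ := ∫ x in Set.Ioi (0 : ℝ),
      ((k : ℝ)⁻¹ * ∑ j, (if x < z j then (1 : ℝ) else 0)) ^ 2 with hC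
  constructor
  · -- γ-direction
    set ℓ : ℝ → ℝ × ℝ := fun aa => (aa, θs.2) with hℓ
    have hcont : ContinuousAt ℓ θs.1 := by fun_prop
    have hcomp : IsLocalMin (M ∘ ℓ) θs.1 := hlocM.comp_continuous hcont
    have hev : (M ∘ ℓ) =ᶠ[nhds θs.1] (fun aa => C + 2 * (θs.2 / (2 * (2 - aa))
        - (k : ℝ)⁻¹ * ∑ j, θs.2 / (aa - 1)
            * ((1 + aa * z j / θs.2) ^ ((aa - 1) / aa : ℝ) - 1))) := by
      filter_upwards [isOpen_Ioo.mem_nhds (Set.mem_Ioo.mpr ⟨hγ0, hγ1⟩)] with aa haa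
      exact L2_decomp haa.1 haa.2 hσ k hk z hz
    have hloc2 := hcomp.congr hev
    have hfun : (fun aa : ℝ => C + 2 * (θs.2 / (2 * (2 - aa))
        - (k : ℝ)⁻¹ * ∑ j, θs.2 / (aa - 1)
            * ((1 + aa * z j / θs.2) ^ ((aa - 1) / aa : ℝ) - 1)))
        = (fun aa : ℝ => C + 2 * ((k : ℝ)⁻¹ * ∑ j, (θs.2 / (2 * (2 - aa))
            - θs.2 / (aa - 1) * ((1 + aa * z j / θs.2) ^ ((aa - 1) / aa : ℝ) - 1)))) := by
      funext aa
      rw [Finset.sum_sub_distrib, Finset.sum_const, Finset.card_univ,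
        Fintype.card_fin, nsmul_eq_mul]
      field_simp
    rw [hfun] at hloc2
    have hsum : HasDerivAt (fun aa : ℝ => (k : ℝ)⁻¹ * ∑ j, (θs.2 / (2 * (2 - aa))
          - θs.2 / (aa - 1) * ((1 + aa * z j / θs.2) ^ ((aa - 1) / aa : ℝ) - 1)))
        ((k : ℝ)⁻¹ * ∑ j, psiGamma θs.1 θs.2 (z j)) θs.1 :=
      (HasDerivAt.fun_sum (fun j _ => keyGamma hγ0 hγ1 hσ (hz j))).const_mul _
    have hder := (hsum.const_mul 2).const_add C
    have hzero := hloc2.hasDerivAt_eq_zero hder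
    have : (2:ℝ) ≠ 0 := two_ne_zero
    exact (mul_eq_zero.mp hzero).resolve_left this
  · -- σ-direction
    set ℓ : ℝ → ℝ × ℝ := fun ss => (θs.1, ss) with hℓ
    have hcont : ContinuousAt ℓ θs.2 := by fun_prop
    have hcomp : IsLocalMin (M ∘ ℓ) θs.2 := hlocM.comp_continuous hcont
    have hev : (M ∘ ℓ) =ᶠ[nhds θs.2] (fun ss => C + 2 * (ss / (2 * (2 - θs.1))
        - (k : ℝ)⁻¹ * ∑ j, ss / (θs.1 - 1)
            * ((1 + θs.1 * z j / ss) ^ ((θs.1 - 1) / θs.1 : ℝ) - 1))) := by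
      filter_upwards [isOpen_Ioi.mem_nhds (Set.mem_Ioi.mpr hσ)] with ss hss
      exact L2_decomp hγ0 hγ1 hss k hk z hz
    have hloc2 := hcomp.congr hev
    have hfun : (fun ss : ℝ => C + 2 * (ss / (2 * (2 - θs.1))
        - (k : ℝ)⁻¹ * ∑ j, ss / (θs.1 - 1)
            * ((1 + θs.1 * z j / ss) ^ ((θs.1 - 1) / θs.1 : ℝ) - 1)))
        = (fun ss : ℝ => C + 2 * ((k : ℝ)⁻¹ * ∑ j, (ss / (2 * (2 - θs.1))
            - ss / (θs.1 - 1) * ((1 + θs.1 * z j / ss) ^ ((θs.1 - 1) / θs.1 : ℝ) - 1)))) := by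
      funext ss
      rw [Finset.sum_sub_distrib, Finset.sum_const, Finset.card_univ,
        Fintype.card_fin, nsmul_eq_mul]
      field_simp
    rw [hfun] at hloc2
    have hsum : HasDerivAt (fun ss : ℝ => (k : ℝ)⁻¹ * ∑ j, (ss / (2 * (2 - θs.1))
          - ss / (θs.1 - 1) * ((1 + θs.1 * z j / ss) ^ ((θs.1 - 1) / θs.1 : ℝ) - 1)))
        ((k : ℝ)⁻¹ * ∑ j, psiSigma θs.1 θs.2 (z j)) θs.2 :=
      (HasDerivAt.fun_sum (fun j _ => keySigma hγ0 hγ1 hσ (hz j))).const_mul _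
    have hder := (hsum.const_mul 2).const_add C
    have hzero := hloc2.hasDerivAt_eq_zero hder
    have : (2:ℝ) ≠ 0 := two_ne_zero
    exact (mul_eq_zero.mp hzero).resolve_left this
end

section
/- Let Θ ⊂ (0,1) × (0,∞) be compact and let θ₀ = (γ₀, σ₀) ∈ Θ. Let Z₁, Z₂, … be i.i.d. random variables on a probability space with distribution GPD(γ₀,σ₀), and for each k define the random functional J_k(θ) = ∫₀^∞ ( k⁻¹ Σ_{j=1}^k 1{Z_j > x} − S_θ(x) )² dx for θ ∈ Θ. Suppose (θ̂_k)_{k≥1} is a sequence of Θ-valued measurable estimators such that J_k(θ̂_k) ≤ J_k(θ₀) + ε_k where ε_k are nonnegative random variables converging to 0 in probability. Then θ̂_k converges to θ₀ in probability as k → ∞, and moreover for every fixed x ≥ 0 the random variable S_{θ̂_k}(x) converges in probability to S_{γ₀,σ₀}(x). -/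
open Real MeasureTheory Set Filter

/-- Density of GPD(γ,σ). -/
noncomputable def gpdPdf (γ σ x : ℝ) : ℝ := σ⁻¹ * (1 + γ * x / σ) ^ (-1 / γ - 1 : ℝ)

/-- The GPD(γ,σ) distribution on `ℝ`, as the measure with density `gpdPdf γ σ`
with respect to Lebesgue measure restricted to `[0,∞)`. -/
noncomputable def gpdMeasure (γ σ : ℝ) : Measure ℝ :=
  (volume.restrict (Set.Ici (0 : ℝ))).withDensity fun x => ENNReal.ofReal (gpdPdf γ σ x)


open Topology ProbabilityTheory

lemma lemA {r p : ℝ} (hr : 0 < r) (hp : p < -1) :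
    IntegrableOn (fun x => (1 + r * x) ^ p) (Set.Ioi (0:ℝ)) := by
  have h1 : IntegrableOn (fun x => (1 + r * x) ^ p) (Set.Ioc (0:ℝ) 1) := by
    apply Integrable.mono' (integrable_const (1:ℝ)) ?_ ?_
    · exact Measurable.aestronglyMeasurable (by fun_prop)
    · filter_upwards [ae_restrict_mem measurableSet_Ioc] with x hx
      have hb : (1:ℝ) ≤ 1 + r * x := by nlinarith [hx.1]
      rw [Real.norm_eq_abs, abs_of_nonneg (Real.rpow_nonneg (by linarith) _)]
      calc (1 + r * x) ^ p ≤ (1 + r*x) ^ (0:ℝ) :=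
            Real.rpow_le_rpow_of_exponent_le hb (by linarith)
        _ = 1 := by rw [Real.rpow_zero]
  have h2 : IntegrableOn (fun x => (1 + r * x) ^ p) (Set.Ioi (1:ℝ)) := by
    have hint : IntegrableOn (fun x => (r^p) * x ^ p) (Set.Ioi (1:ℝ)) :=
      (integrableOn_Ioi_rpow_of_lt hp one_pos).const_mul _
    apply Integrable.mono' hint ?_ ?_
    · exact Measurable.aestronglyMeasurable (by fun_prop)
    · filter_upwards [ae_restrict_mem measurableSet_Ioi] with x hx
      have hx0 : (0:ℝ) < x := lt_trans one_pos hx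
      have hb : (0:ℝ) < r * x := by positivity
      rw [Real.norm_eq_abs, abs_of_nonneg (Real.rpow_nonneg (by linarith) _),
        ← Real.mul_rpow hr.le hx0.le]
      exact Real.rpow_le_rpow_of_nonpos hb (by linarith) (by linarith)
  have := h1.union h2
  apply this.mono_set
  intro x hx
  rcases le_or_gt x 1 with h | h
  · exact Or.inl ⟨hx, h⟩
  · exact Or.inr h

lemma base_pos {γ σ x : ℝ} (hγ : 0 < γ) (hσ : 0 < σ) (hx : 0 ≤ x) : 0 < 1 + γ * x / σ := by
  have : 0 ≤ γ * x / σ := by positivity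
  linarith

lemma gpd_hasDerivAt {γ σ x : ℝ} (hγ : 0 < γ) (hσ : 0 < σ) (hx : 0 ≤ x) :
    HasDerivAt (gpdSurvival γ σ) (-(gpdPdf γ σ x)) x := by
  have hb : HasDerivAt (fun t : ℝ => 1 + γ * t / σ) (γ / σ) x := by
    simpa using (((hasDerivAt_id x).const_mul γ).div_const σ).const_add 1
  have hbx : (0:ℝ) < 1 + γ * x / σ := base_pos hγ hσ hx
  have := hb.rpow_const (p := (-1/γ : ℝ)) (Or.inl hbx.ne')
  convert this using 1
  · rfl
  unfold gpdPdf
  field_simp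

lemma gpd_tendsto {γ σ : ℝ} (hγ : 0 < γ) (hσ : 0 < σ) :
    Tendsto (gpdSurvival γ σ) atTop (𝓝 0) := by
  have hb : Tendsto (fun t : ℝ => 1 + γ * t / σ) atTop atTop := by
    apply tendsto_atTop_add_const_left
    exact (tendsto_id.const_mul_atTop hγ).atTop_div_const hσ
  have h2 : Tendsto (fun u : ℝ => u ^ (-(1/γ) : ℝ)) atTop (𝓝 0) :=
    tendsto_rpow_neg_atTop (by positivity)
  have := h2.comp hb
  apply this.congr
  intro t
  simp only [Function.comp, gpdSurvival, neg_div]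

lemma gpdPdf_integrableOn {γ σ x : ℝ} (hγ : 0 < γ) (hσ : 0 < σ) (hx : 0 ≤ x) :
    IntegrableOn (gpdPdf γ σ) (Set.Ioi x) := by
  have h0 : IntegrableOn (fun t => (1 + (γ/σ) * t) ^ (-1/γ - 1 : ℝ)) (Set.Ioi (0:ℝ)) :=
    lemA (by positivity) (by
      have h : (0:ℝ) < 1/γ := by positivity
      have h2 : (-1:ℝ)/γ = -(1/γ) := neg_div γ 1
      linarith)
  have h1 : IntegrableOn (fun t => (1 + γ * t / σ) ^ (-1/γ - 1 : ℝ)) (Set.Ioi x) := by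
    apply IntegrableOn.mono_set _ (Set.Ioi_subset_Ioi hx)
    apply h0.congr_fun _ measurableSet_Ioi
    intro t _
    simp only
    ring_nf
  exact h1.const_mul σ⁻¹

lemma gpd_integral_Ioi {γ σ x : ℝ} (hγ : 0 < γ) (hσ : 0 < σ) (hx : 0 ≤ x) :
    ∫ t in Set.Ioi x, gpdPdf γ σ t = gpdSurvival γ σ x := by
  have hderiv : ∀ t ∈ Set.Ici x, HasDerivAt (fun t => -(gpdSurvival γ σ t)) (gpdPdf γ σ t) t := by
    intro t ht
    have h := (gpd_hasDerivAt hγ hσ (le_trans hx ht)).neg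
    rw [neg_neg] at h
    exact h
  have htd : Tendsto (fun t => -(gpdSurvival γ σ t)) atTop (𝓝 (0:ℝ)) := by
    simpa using (gpd_tendsto hγ hσ).neg
  have := integral_Ioi_of_hasDerivAt_of_tendsto' hderiv (gpdPdf_integrableOn hγ hσ hx) htd
  simpa using this

lemma gpdMeasure_Ioi {γ σ x : ℝ} (hγ : 0 < γ) (hσ : 0 < σ) (hx : 0 ≤ x) :
    gpdMeasure γ σ (Set.Ioi x) = ENNReal.ofReal (gpdSurvival γ σ x) := by
  rw [gpdMeasure, withDensity_apply _ measurableSet_Ioi, Measure.restrict_restrict measurableSet_Ioi]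
  have hsub : Set.Ioi x ∩ Set.Ici 0 = Set.Ioi x := by
    apply Set.inter_eq_left.mpr
    exact fun t ht => le_trans hx (le_of_lt ht)
  rw [hsub, ← ofReal_integral_eq_lintegral_ofReal (gpdPdf_integrableOn hγ hσ hx)]
  · rw [gpd_integral_Ioi hγ hσ hx]
  · filter_upwards [ae_restrict_mem measurableSet_Ioi] with t ht
    have := base_pos hγ hσ (le_trans hx (le_of_lt ht))
    have : (0:ℝ) ≤ (1 + γ * t / σ) ^ (-1/γ - 1 : ℝ) := Real.rpow_nonneg this.le _
    unfold gpdPdf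
    positivity

lemma gpdSurvival_pos {γ σ x : ℝ} (hγ : 0 < γ) (hσ : 0 < σ) (hx : 0 ≤ x) :
    0 < gpdSurvival γ σ x :=
  Real.rpow_pos_of_pos (base_pos hγ hσ hx) _

lemma gpdPdf_eq {γ σ x : ℝ} (hγ : 0 < γ) (hσ : 0 < σ) (hx : 0 ≤ x) :
    gpdPdf γ σ x = gpdSurvival γ σ x / (σ + γ * x) := by
  have hb := base_pos hγ hσ hx
  unfold gpdPdf gpdSurvival
  rw [show (-1/γ - 1 : ℝ) = (-1/γ) + (-1) by ring, Real.rpow_add hb, Real.rpow_neg_one]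
  field_simp

lemma gpd_inj {γ σ γ' σ' : ℝ} (hγ : 0 < γ) (hσ : 0 < σ) (hγ' : 0 < γ') (hσ' : 0 < σ')
    (h : ∀ x ∈ Set.Ioi (0:ℝ), gpdSurvival γ σ x = gpdSurvival γ' σ' x) :
    γ = γ' ∧ σ = σ' := by
  have hpdf : ∀ x ∈ Set.Ioi (0:ℝ), gpdPdf γ σ x = gpdPdf γ' σ' x := by
    intro x hx
    have hev : gpdSurvival γ σ =ᶠ[𝓝 x] gpdSurvival γ' σ' := by
      filter_upwards [Ioi_mem_nhds hx] with t ht using h t ht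
    have h1 := gpd_hasDerivAt hγ hσ (le_of_lt hx)
    have h2 : HasDerivAt (gpdSurvival γ σ) (-(gpdPdf γ' σ' x)) x :=
      (hev.hasDerivAt_iff).mpr (gpd_hasDerivAt hγ' hσ' (le_of_lt hx))
    have := h1.unique h2
    linarith
  have key : ∀ x ∈ Set.Ioi (0:ℝ), σ + γ * x = σ' + γ' * x := by
    intro x hx
    have hx0 : (0:ℝ) ≤ x := le_of_lt hx
    have e1 := hpdf x hx
    rw [gpdPdf_eq hγ hσ hx0, gpdPdf_eq hγ' hσ' hx0, h x hx] at e1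
    have hS := gpdSurvival_pos hγ' hσ' hx0
    have hd1 : 0 < σ + γ * x := by positivity
    have hd2 : 0 < σ' + γ' * x := by positivity
    field_simp at e1
    linarith
  have k1 := key 1 (by norm_num)
  have k2 := key 2 (by norm_num)
  constructor <;> linarith

lemma gpdSurvival_nonneg {γ σ x : ℝ} (hγ : 0 < γ) (hσ : 0 < σ) (hx : 0 ≤ x) :
    0 ≤ gpdSurvival γ σ x := Real.rpow_nonneg (base_pos hγ hσ hx).le _

lemma gpdSurvival_le_one {γ σ x : ℝ} (hγ : 0 < γ) (hσ : 0 < σ) (hx : 0 ≤ x) :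
    gpdSurvival γ σ x ≤ 1 := by
  have hb : (1:ℝ) ≤ 1 + γ * x / σ := by
    have : (0:ℝ) ≤ γ * x / σ := by positivity
    linarith
  have := Real.rpow_le_rpow_of_exponent_le hb
    (show (-1/γ : ℝ) ≤ 0 by
      have : (0:ℝ) < 1/γ := by positivity
      have h2 : (-1:ℝ)/γ = -(1/γ) := neg_div γ 1
      linarith)
  simpa [gpdSurvival] using this.trans_eq (Real.rpow_zero _)

lemma gpdSurvival_le_bound {a b c d γ σ x : ℝ} (ha : 0 < a) (hd : 0 < d)
    (hγa : a ≤ γ) (hγb : γ ≤ b) (hσc : 0 < σ) (hσd : σ ≤ d) (hb1 : 0 < b) (hx : 0 ≤ x) :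
    gpdSurvival γ σ x ≤ (1 + (a / d) * x) ^ (-(1/b) : ℝ) := by
  have hγ : 0 < γ := lt_of_lt_of_le ha hγa
  have hbase1 : (1:ℝ) ≤ 1 + (a/d) * x := by
    have : (0:ℝ) ≤ (a/d) * x := by positivity
    linarith
  have hmono : (a/d) * x ≤ γ * x / σ := by
    rw [mul_comm γ x, mul_div_assoc, mul_comm (a/d) x]
    apply mul_le_mul_of_nonneg_left _ hx
    exact div_le_div₀ hγ.le hγa hσc hσd
  have hbase2 : 1 + (a/d) * x ≤ 1 + γ * x / σ := by linarith
  calc gpdSurvival γ σ x = (1 + γ * x / σ) ^ (-1/γ : ℝ) := rfl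
    _ ≤ (1 + γ * x / σ) ^ (-(1/b) : ℝ) := by
        apply Real.rpow_le_rpow_of_exponent_le (le_trans hbase1 hbase2)
        rw [neg_div]
        apply neg_le_neg
        exact one_div_le_one_div_of_le hγ hγb
    _ ≤ (1 + (a/d) * x) ^ (-(1/b) : ℝ) := by
        apply Real.rpow_le_rpow_of_nonpos (by linarith) hbase2
        simp [one_div, inv_nonneg.mpr hb1.le]

lemma bound_sq_integrable {a b d : ℝ} (ha : 0 < a) (hd : 0 < d) (hb0 : 0 < b) (hb1 : b < 1) :
    IntegrableOn (fun x => ((1 + (a / d) * x) ^ (-(1/b) : ℝ)) ^ 2) (Set.Ioi (0:ℝ)) := by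
  have h := lemA (r := a/d) (p := -(2/b)) (by positivity)
    (by
      have h2 : (2:ℝ)/b > 2 := by
        rw [gt_iff_lt, lt_div_iff₀ hb0]; linarith
      linarith)
  apply h.congr_fun _ measurableSet_Ioi
  intro x hx
  have hbase : (0:ℝ) < 1 + (a/d) * x := by
    have : (0:ℝ) < x := hx
    positivity
  have e : ((1 + (a/d)*x) ^ (-(1/b) : ℝ)) ^ (2:ℕ) = (1 + (a/d)*x) ^ (-(2/b) : ℝ) := by
    rw [← Real.rpow_natCast _ 2, ← Real.rpow_mul hbase.le]
    congr 1
    push_cast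
    ring
  simpa using e.symm

lemma gpd_contTheta {x : ℝ} (hx : 0 ≤ x) {θ : ℝ × ℝ} (hθ1 : 0 < θ.1) (hθ2 : 0 < θ.2) :
    ContinuousAt (fun p : ℝ × ℝ => gpdSurvival p.1 p.2 x) θ := by
  have hbase : ContinuousAt (fun p : ℝ × ℝ => 1 + p.1 * x / p.2) θ := by
    apply ContinuousAt.add continuousAt_const
    exact (continuousAt_fst.mul continuousAt_const).div continuousAt_snd hθ2.ne'
  have hexp : ContinuousAt (fun p : ℝ × ℝ => (-1 / p.1 : ℝ)) θ :=
    continuousAt_const.div continuousAt_fst hθ1.ne'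
  have hbpos : (0:ℝ) < 1 + θ.1 * x / θ.2 := base_pos hθ1 hθ2 hx
  exact ContinuousAt.rpow hbase hexp (Or.inl hbpos.ne')

lemma gpdSurvival_integrableOn {γ σ : ℝ} (hγ : 0 < γ) (hγ1 : γ < 1) (hσ : 0 < σ) :
    IntegrableOn (gpdSurvival γ σ) (Set.Ioi (0:ℝ)) := by
  have h := lemA (r := γ/σ) (p := -1/γ) (by positivity)
    (by
      have h1 : (1:ℝ) < 1/γ := by rw [lt_div_iff₀ hγ]; linarith
      have h2 : (-1:ℝ)/γ = -(1/γ) := neg_div γ 1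
      linarith)
  apply h.congr_fun _ measurableSet_Ioi
  intro t _
  simp only [gpdSurvival]
  ring_nf

lemma gpdSurvival_measurableX {γ σ : ℝ} : Measurable (gpdSurvival γ σ) := by
  unfold gpdSurvival
  fun_prop

lemma gpdSurvival_contX {γ σ x : ℝ} (hγ : 0 < γ) (hσ : 0 < σ) (hx : 0 ≤ x) :
    ContinuousAt (fun t => gpdSurvival γ σ t) x := by
  have hb : ContinuousAt (fun t : ℝ => 1 + γ * t / σ) x := by fun_prop
  exact hb.rpow_const (Or.inl (base_pos hγ hσ hx).ne')

lemma sq_diff_le {m u v : ℝ} (hu0 : 0 ≤ u) (hum : u ≤ m) (hv0 : 0 ≤ v) (hvm : v ≤ m) :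
    (u - v) ^ 2 ≤ m ^ 2 := sq_le_sq' (by linarith) (by linarith)

/-- integrability of the squared difference of two survival functions -/
lemma Ddiff_integrable {γ₀ σ₀ : ℝ} (hγ₀ : 0 < γ₀) (hγ₀1 : γ₀ < 1) (hσ₀ : 0 < σ₀)
    {γ σ : ℝ} (hγ : 0 < γ) (hγ1 : γ < 1) (hσ : 0 < σ) :
    IntegrableOn (fun x => (gpdSurvival γ σ x - gpdSurvival γ₀ σ₀ x) ^ 2)
      (Set.Ioi (0:ℝ)) := by
  have hint : IntegrableOn (fun x => 2 * gpdSurvival γ σ x + 2 * gpdSurvival γ₀ σ₀ x)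
      (Set.Ioi (0:ℝ)) :=
    ((gpdSurvival_integrableOn hγ hγ1 hσ).const_mul 2).add
      ((gpdSurvival_integrableOn hγ₀ hγ₀1 hσ₀).const_mul 2)
  apply Integrable.mono' hint
  · exact ((gpdSurvival_measurableX.sub gpdSurvival_measurableX).pow_const 2).aestronglyMeasurable
  · filter_upwards [ae_restrict_mem measurableSet_Ioi] with t ht
    have ht0 : (0:ℝ) ≤ t := le_of_lt ht
    have h1 := gpdSurvival_nonneg hγ hσ ht0
    have h2 := gpdSurvival_le_one hγ hσ ht0
    have h3 := gpdSurvival_nonneg hγ₀ hσ₀ ht0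
    have h4 := gpdSurvival_le_one hγ₀ hσ₀ ht0
    rw [Real.norm_eq_abs, abs_of_nonneg (sq_nonneg _)]
    nlinarith

lemma Dpos {γ₀ σ₀ : ℝ} (hγ₀ : 0 < γ₀) (hγ₀1 : γ₀ < 1) (hσ₀ : 0 < σ₀)
    {γ σ : ℝ} (hγ : 0 < γ) (hγ1 : γ < 1) (hσ : 0 < σ)
    (hne : ¬(γ = γ₀ ∧ σ = σ₀)) :
    0 < ∫ x in Set.Ioi (0:ℝ), (gpdSurvival γ σ x - gpdSurvival γ₀ σ₀ x) ^ 2 := by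
  set f : ℝ → ℝ := fun x => (gpdSurvival γ σ x - gpdSurvival γ₀ σ₀ x) ^ 2 with hf
  have h0 : 0 ≤ᵐ[volume.restrict (Set.Ioi (0:ℝ))] f :=
    Eventually.of_forall fun x => sq_nonneg _
  rw [setIntegral_pos_iff_support_of_nonneg_ae h0 (Ddiff_integrable hγ₀ hγ₀1 hσ₀ hγ hγ1 hσ)]
  obtain ⟨x₀, hx₀I, hx₀⟩ : ∃ x ∈ Set.Ioi (0:ℝ), gpdSurvival γ σ x ≠ gpdSurvival γ₀ σ₀ x := by
    by_contra hc
    push_neg at hc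
    exact hne (gpd_inj hγ hσ hγ₀ hσ₀ hc)
  have hx₀0 : (0:ℝ) ≤ x₀ := le_of_lt hx₀I
  have hfx₀ : 0 < f x₀ := by
    have := sub_ne_zero.mpr hx₀
    positivity
  have hfc : ContinuousAt f x₀ :=
    (((gpdSurvival_contX hγ hσ hx₀0).sub (gpdSurvival_contX hγ₀ hσ₀ hx₀0)).pow 2)
  have hev : ∀ᶠ y in 𝓝 x₀, y ∈ Function.support f ∩ Set.Ioi (0:ℝ) := by
    have h1 : ∀ᶠ y in 𝓝 x₀, f y ∈ Set.Ioi (0:ℝ) :=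
      hfc.eventually_mem (Ioi_mem_nhds hfx₀)
    have h2 : ∀ᶠ y in 𝓝 x₀, y ∈ Set.Ioi (0:ℝ) := isOpen_Ioi.eventually_mem hx₀I
    filter_upwards [h1, h2] with y hy1 hy2
    exact ⟨ne_of_gt hy1, hy2⟩
  obtain ⟨dd, hdd0, hball⟩ := Metric.eventually_nhds_iff_ball.mp hev
  calc (0:ENNReal) < volume (Metric.ball x₀ dd) := Metric.measure_ball_pos _ _ hdd0
    _ ≤ volume (Function.support f ∩ Set.Ioi (0:ℝ)) := measure_mono hball

lemma Dcont {γ₀ σ₀ : ℝ} (hγ₀ : 0 < γ₀) (hσ₀ : 0 < σ₀) (Θ : Set (ℝ × ℝ))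
    (hpos : ∀ θ ∈ Θ, 0 < θ.1 ∧ 0 < θ.2) (Bo : ℝ → ℝ)
    (hSle : ∀ θ ∈ Θ, ∀ x : ℝ, 0 ≤ x → gpdSurvival θ.1 θ.2 x ≤ Bo x)
    (hS0le : ∀ x : ℝ, 0 ≤ x → gpdSurvival γ₀ σ₀ x ≤ Bo x)
    (hBo2 : IntegrableOn (fun x => Bo x ^ 2) (Set.Ioi (0:ℝ))) :
    ContinuousOn (fun θ : ℝ × ℝ =>
      ∫ x in Set.Ioi (0:ℝ), (gpdSurvival θ.1 θ.2 x - gpdSurvival γ₀ σ₀ x) ^ 2) Θ := by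
  intro θ hθ
  have key := tendsto_integral_filter_of_dominated_convergence
    (μ := volume.restrict (Set.Ioi (0:ℝ))) (l := 𝓝[Θ] θ)
    (F := fun (θ' : ℝ × ℝ) x => (gpdSurvival θ'.1 θ'.2 x - gpdSurvival γ₀ σ₀ x) ^ 2)
    (f := fun x => (gpdSurvival θ.1 θ.2 x - gpdSurvival γ₀ σ₀ x) ^ 2)
    (bound := fun x => Bo x ^ 2)
    (Eventually.of_forall fun θ' =>
      ((gpdSurvival_measurableX.sub gpdSurvival_measurableX).pow_const 2).aestronglyMeasurable)
    ?_ hBo2 ?_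
  · exact key
  · filter_upwards [self_mem_nhdsWithin] with θ' hθ'
    filter_upwards [ae_restrict_mem measurableSet_Ioi] with x hx
    have hx0 : (0:ℝ) ≤ x := le_of_lt hx
    rw [Real.norm_eq_abs, abs_of_nonneg (sq_nonneg _)]
    exact sq_diff_le (gpdSurvival_nonneg (hpos θ' hθ').1 (hpos θ' hθ').2 hx0)
      (hSle θ' hθ' x hx0) (gpdSurvival_nonneg hγ₀ hσ₀ hx0) (hS0le x hx0)
  · filter_upwards [ae_restrict_mem measurableSet_Ioi] with x hx
    have hx0 : (0:ℝ) ≤ x := le_of_lt hx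
    have hca : ContinuousAt (fun θ' : ℝ × ℝ =>
        (gpdSurvival θ'.1 θ'.2 x - gpdSurvival γ₀ σ₀ x) ^ 2) θ :=
      ((gpd_contTheta hx0 (hpos θ hθ).1 (hpos θ hθ).2).sub continuousAt_const).pow 2
    exact hca.continuousWithinAt

lemma Dsep {D : ℝ × ℝ → ℝ} {Θ : Set (ℝ × ℝ)} (hΘ : IsCompact Θ)
    (hD : ContinuousOn D Θ) {θ₀ : ℝ × ℝ}
    (hpos : ∀ θ ∈ Θ, θ ≠ θ₀ → 0 < D θ) {r : ℝ} (hr : 0 < r) :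
    ∃ δ > 0, ∀ θ ∈ Θ, r ≤ dist θ θ₀ → δ ≤ D θ := by
  set K := Θ ∩ {θ | r ≤ dist θ θ₀} with hK
  have hKc : IsCompact K :=
    hΘ.inter_right (isClosed_le continuous_const ((continuous_id.dist continuous_const)))
  by_cases hKne : K.Nonempty
  · obtain ⟨θm, hθmK, hmin⟩ := hKc.exists_isMinOn hKne (hD.mono Set.inter_subset_left)
    have hθmne : θm ≠ θ₀ := by
      intro h
      have := hθmK.2
      rw [h] at this
      simp only [Set.mem_setOf_eq, dist_self] at this
      linarith
    refine ⟨D θm, hpos θm hθmK.1 hθmne, fun θ hθ hdist => ?_⟩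
    exact isMinOn_iff.mp hmin θ (Set.mem_inter hθ hdist)
  · refine ⟨1, one_pos, fun θ hθ hdist => ?_⟩
    exact absurd ⟨θ, Set.mem_inter hθ hdist⟩ hKne

lemma empirical_sq_integrable (Zv : ℕ → ℝ) (k : ℕ) {γ σ : ℝ}
    (hγ : 0 < γ) (hγ1 : γ < 1) (hσ : 0 < σ) :
    IntegrableOn (fun x => ((k:ℝ)⁻¹ * ∑ j ∈ Finset.range k, (if x < Zv j then (1:ℝ) else 0)
      - gpdSurvival γ σ x) ^ 2) (Set.Ioi (0:ℝ)) := by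
  obtain ⟨M, hM'⟩ := ((Finset.range k).image Zv).exists_le
  have hM : ∀ j ∈ Finset.range k, Zv j ≤ M := fun j hj =>
    hM' _ (Finset.mem_image_of_mem _ hj)
  set F : ℝ → ℝ := fun x => (k:ℝ)⁻¹ * ∑ j ∈ Finset.range k, (if x < Zv j then (1:ℝ) else 0)
    with hF
  have hF0 : ∀ x, 0 ≤ F x := by
    intro x
    apply mul_nonneg (by positivity)
    apply Finset.sum_nonneg
    intro j _
    split <;> norm_num
  have hF1 : ∀ x, F x ≤ 1 := by
    intro x
    rcases Nat.eq_zero_or_pos k with hk | hk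
    · simp [hF, hk]
    · have hsum : ∑ j ∈ Finset.range k, (if x < Zv j then (1:ℝ) else 0) ≤ (k:ℝ) := by
        calc ∑ j ∈ Finset.range k, (if x < Zv j then (1:ℝ) else 0)
            ≤ ∑ j ∈ Finset.range k, (1:ℝ) := by
              apply Finset.sum_le_sum; intro j _; split <;> norm_num
          _ = (k:ℝ) := by simp
      have hkpos : (0:ℝ) < (k:ℝ) := by exact_mod_cast hk
      calc F x ≤ (k:ℝ)⁻¹ * (k:ℝ) := by
            apply mul_le_mul_of_nonneg_left hsum (by positivity)
        _ = 1 := inv_mul_cancel₀ hkpos.ne'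
  have hFM : ∀ x, M < x → F x = 0 := by
    intro x hMx
    have : ∀ j ∈ Finset.range k, (if x < Zv j then (1:ℝ) else 0) = 0 := by
      intro j hj
      rw [if_neg]
      push_neg
      exact le_of_lt (lt_of_le_of_lt (hM j hj) hMx)
    rw [hF]
    simp only
    rw [Finset.sum_congr rfl this]
    simp
  set g : ℝ → ℝ := fun x => Set.indicator (Set.Iic M) (fun _ => (2:ℝ)) x
    + 2 * gpdSurvival γ σ x with hg
  have hgint : IntegrableOn g (Set.Ioi (0:ℝ)) := by
    apply Integrable.add
    · rw [integrable_indicator_iff measurableSet_Iic]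
      rw [IntegrableOn, Measure.restrict_restrict measurableSet_Iic]
      apply (integrableOn_const_iff).mpr
      right
      calc volume (Set.Iic M ∩ Set.Ioi 0) ≤ volume (Set.Ioc 0 M) := by
            apply measure_mono
            intro t ⟨h1, h2⟩
            exact ⟨h2, h1⟩
        _ < ⊤ := measure_Ioc_lt_top
    · exact (gpdSurvival_integrableOn hγ hγ1 hσ).const_mul 2
  apply Integrable.mono' hgint
  · apply Measurable.aestronglyMeasurable
    apply Measurable.pow_const
    apply Measurable.sub _ gpdSurvival_measurableX
    apply Measurable.const_mul
    apply Finset.measurable_sum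
    intro j _
    exact Measurable.ite (measurableSet_lt measurable_id measurable_const)
      measurable_const measurable_const
  · filter_upwards [ae_restrict_mem measurableSet_Ioi] with x hx
    have hx0 : (0:ℝ) ≤ x := le_of_lt hx
    have hS0 := gpdSurvival_nonneg hγ hσ hx0
    have hS1 := gpdSurvival_le_one hγ hσ hx0
    rw [Real.norm_eq_abs, abs_of_nonneg (sq_nonneg _)]
    rcases le_or_gt x M with hxM | hxM
    · have hind : Set.indicator (Set.Iic M) (fun _ => (2:ℝ)) x = 2 :=
        Set.indicator_of_mem (Set.mem_Iic.mpr hxM) _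
      rw [hg]
      simp only [hind]
      show (F x - gpdSurvival γ σ x) ^ 2 ≤ 2 + 2 * gpdSurvival γ σ x
      nlinarith [hF0 x, hF1 x]
    · have hind : Set.indicator (Set.Iic M) (fun _ => (2:ℝ)) x = 0 :=
        Set.indicator_of_notMem (by simpa using not_le.mpr hxM) _
      rw [hg]
      simp only [hind]
      show (F x - gpdSurvival γ σ x) ^ 2 ≤ 0 + 2 * gpdSurvival γ σ x
      rw [hFM x hxM]
      nlinarith

lemma exp_sq_bound {Ω : Type*} [MeasurableSpace Ω] (P : Measure Ω) [IsProbabilityMeasure P]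
    (Z : ℕ → Ω → ℝ) (hZmeas : ∀ i, Measurable (Z i))
    (hZindep : ProbabilityTheory.iIndepFun Z P)
    {x s : ℝ} (hPx : ∀ j, P {ω | x < Z j ω} = ENNReal.ofReal s)
    (hs0 : 0 ≤ s) (k : ℕ) (hk : 1 ≤ k) :
    ∫ ω, ((k : ℝ)⁻¹ * ∑ j ∈ Finset.range k, (if x < Z j ω then (1 : ℝ) else 0) - s) ^ 2 ∂P
      ≤ (k : ℝ)⁻¹ * s := by
  set B : ℕ → Ω → ℝ := fun j ω => if x < Z j ω then (1 : ℝ) else 0 with hB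
  have hkR : (0:ℝ) < (k:ℝ) := by exact_mod_cast hk
  have hmeasB : ∀ j, Measurable (B j) := fun j =>
    Measurable.ite (measurableSet_lt measurable_const (hZmeas j)) measurable_const measurable_const
  have hmemB : ∀ j, MemLp (B j) 2 P := fun j =>
    MemLp.of_bound (hmeasB j).aestronglyMeasurable 1
      (Eventually.of_forall fun ω => by by_cases h : x < Z j ω <;> simp [hB, h])
  have hEB : ∀ j, ∫ ω, B j ω ∂P = s := by
    intro j
    have hA : MeasurableSet {ω | x < Z j ω} := measurableSet_lt measurable_const (hZmeas j)
    have : B j = Set.indicator {ω | x < Z j ω} (fun _ => (1:ℝ)) := by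
      ext ω; by_cases h : x < Z j ω <;> simp [hB, h, Set.indicator_apply]
    rw [this, integral_indicator_const _ hA, measureReal_def, hPx j, smul_eq_mul, mul_one,
      ENNReal.toReal_ofReal hs0]
  have hBsq : ∀ j ω, B j ω ^ 2 = B j ω := by
    intro j ω; by_cases h : x < Z j ω <;> simp [hB, h]
  have hvarB : ∀ j, variance (B j) P = s - s ^ 2 := by
    intro j
    rw [variance_eq_sub (hmemB j)]
    have : ∫ ω, (B j ^ 2) ω ∂P = s := by
      simp only [Pi.pow_apply]
      rw [show (fun ω => B j ω ^ 2) = B j from funext fun ω => hBsq j ω] at *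
      exact hEB j
    rw [this, hEB j]
  set Sk : Ω → ℝ := fun ω => ∑ j ∈ Finset.range k, B j ω with hSk
  have hSkSum : Sk = ∑ j ∈ Finset.range k, B j := by
    funext ω; simp [hSk, Finset.sum_apply]
  have hvarSk : variance Sk P = (k:ℝ) * (s - s ^ 2) := by
    rw [hSkSum, IndepFun.variance_sum (fun j _ => hmemB j)
      (fun i _ j _ hij => (hZindep.indepFun hij).comp
        (measurable_const.ite measurableSet_Ioi measurable_const :
          Measurable fun t : ℝ => if x < t then (1:ℝ) else 0)
        (measurable_const.ite measurableSet_Ioi measurable_const))]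
    · simp [hvarB, Finset.sum_const, Finset.card_range, nsmul_eq_mul]; ring
  have hESk : ∫ ω, Sk ω ∂P = (k:ℝ) * s := by
    rw [hSk]
    rw [integral_finset_sum _ (fun j _ => (hmemB j).integrable one_le_two)]
    simp [hEB, Finset.sum_const, Finset.card_range, nsmul_eq_mul]
  have hvar_eq : ∫ ω, (Sk ω - (k:ℝ) * s) ^ 2 ∂P = (k:ℝ) * (s - s ^ 2) := by
    have hmem : MemLp Sk 2 P := by
      rw [hSkSum]; exact memLp_finset_sum' _ (fun j _ => hmemB j)
    have := variance_eq_integral hmem.aemeasurable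
    rw [hESk] at this
    rw [← hvarSk, this]
  have key : ∀ ω, ((k : ℝ)⁻¹ * ∑ j ∈ Finset.range k, B j ω - s) ^ 2
      = (k:ℝ)⁻¹ ^ 2 * (Sk ω - (k:ℝ) * s) ^ 2 := by
    intro ω
    have : (k : ℝ)⁻¹ * ∑ j ∈ Finset.range k, B j ω - s = (k:ℝ)⁻¹ * (Sk ω - (k:ℝ)*s) := by
      rw [hSk]; field_simp
    rw [this, mul_pow]
  calc ∫ ω, ((k : ℝ)⁻¹ * ∑ j ∈ Finset.range k, B j ω - s) ^ 2 ∂P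
      = ∫ ω, (k:ℝ)⁻¹ ^ 2 * (Sk ω - (k:ℝ) * s) ^ 2 ∂P := by
        apply integral_congr_ae; exact Eventually.of_forall fun ω => key ω
    _ = (k:ℝ)⁻¹ ^ 2 * ∫ ω, (Sk ω - (k:ℝ) * s) ^ 2 ∂P := integral_const_mul _ _
    _ = (k:ℝ)⁻¹ ^ 2 * ((k:ℝ) * (s - s ^ 2)) := by rw [hvar_eq]
    _ = (k:ℝ)⁻¹ * (s - s ^ 2) := by field_simp
    _ ≤ (k:ℝ)⁻¹ * s := by
        apply mul_le_mul_of_nonneg_left _ (by positivity)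
        nlinarith [sq_nonneg s]

lemma markov_step {Ω : Type*} [MeasurableSpace Ω] (P : Measure Ω) [IsProbabilityMeasure P]
    (Z : ℕ → Ω → ℝ) (hZmeas : ∀ i, Measurable (Z i))
    (hZindep : ProbabilityTheory.iIndepFun Z P)
    {γ₀ σ₀ : ℝ} (hγ₀ : 0 < γ₀) (hγ₀1 : γ₀ < 1) (hσ₀ : 0 < σ₀)
    (hPx : ∀ j, ∀ x : ℝ, 0 ≤ x → P {ω | x < Z j ω} = ENNReal.ofReal (gpdSurvival γ₀ σ₀ x))
    {δ : ℝ} (hδ : 0 < δ) :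
    Tendsto (fun k : ℕ => P {ω | δ ≤ ∫ x in Set.Ioi (0:ℝ),
      ((k:ℝ)⁻¹ * ∑ j ∈ Finset.range k, (if x < Z j ω then (1:ℝ) else 0)
        - gpdSurvival γ₀ σ₀ x) ^ 2}) atTop (𝓝 0) := by
  set S₀ := gpdSurvival γ₀ σ₀ with hS₀def
  have hS0int : IntegrableOn S₀ (Set.Ioi (0:ℝ)) := gpdSurvival_integrableOn hγ₀ hγ₀1 hσ₀
  set C : ℝ := ∫ x in Set.Ioi (0:ℝ), S₀ x with hCdef
  have hC0 : 0 ≤ C := by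
    apply setIntegral_nonneg measurableSet_Ioi
    intro x hx
    exact gpdSurvival_nonneg hγ₀ hσ₀ (le_of_lt hx)
  set q : ℕ → Ω → ℝ → ℝ := fun k ω x =>
    ((k:ℝ)⁻¹ * ∑ j ∈ Finset.range k, (if x < Z j ω then (1:ℝ) else 0) - S₀ x) ^ 2 with hq
  -- measurability of the uncurried integrand
  have hqm : ∀ k, Measurable (fun p : Ω × ℝ => ENNReal.ofReal (q k p.1 p.2)) := by
    intro k
    apply Measurable.ennreal_ofReal
    apply Measurable.pow_const
    apply Measurable.sub
    · apply Measurable.const_mul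
      apply Finset.measurable_sum
      intro j _
      exact Measurable.ite (measurableSet_lt measurable_snd ((hZmeas j).comp measurable_fst))
        measurable_const measurable_const
    · exact gpdSurvival_measurableX.comp measurable_snd
  have hqmx : ∀ k ω, Measurable (fun x => q k ω x) := by
    intro k ω
    apply Measurable.pow_const
    apply Measurable.sub _ gpdSurvival_measurableX
    apply Measurable.const_mul
    apply Finset.measurable_sum
    intro j _
    exact Measurable.ite (measurableSet_lt measurable_id measurable_const)
      measurable_const measurable_const
  have hqmω : ∀ k x, Measurable (fun ω => q k ω x) := by
    intro k x
    apply Measurable.pow_const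
    apply Measurable.sub _ measurable_const
    apply Measurable.const_mul
    apply Finset.measurable_sum
    intro j _
    exact Measurable.ite (measurableSet_lt measurable_const (hZmeas j))
      measurable_const measurable_const
  set G : ℕ → Ω → ENNReal := fun k ω => ∫⁻ x in Set.Ioi (0:ℝ), ENNReal.ofReal (q k ω x) with hG
  have hGmeas : ∀ k, Measurable (G k) := by
    intro k
    exact Measurable.lintegral_prod_right (f := fun ω x => ENNReal.ofReal (q k ω x)) (hqm k)
  have hJG : ∀ k ω, (∫ x in Set.Ioi (0:ℝ), q k ω x) = (G k ω).toReal := by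
    intro k ω
    rw [hG]
    exact integral_eq_lintegral_of_nonneg_ae (Eventually.of_forall fun x => sq_nonneg _)
      (hqmx k ω).aestronglyMeasurable
  -- the expectation bound
  have hGb : ∀ k, 1 ≤ k → ∫⁻ ω, G k ω ∂P ≤ ENNReal.ofReal ((k:ℝ)⁻¹ * C) := by
    intro k hk
    have hswap : ∫⁻ ω, G k ω ∂P
        = ∫⁻ x in Set.Ioi (0:ℝ), ∫⁻ ω, ENNReal.ofReal (q k ω x) ∂P := by
      rw [hG]
      exact lintegral_lintegral_swap (hqm k).aemeasurable
    rw [hswap]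
    have hkinv0 : (0:ℝ) ≤ (k:ℝ)⁻¹ := by positivity
    calc ∫⁻ x in Set.Ioi (0:ℝ), ∫⁻ ω, ENNReal.ofReal (q k ω x) ∂P
        ≤ ∫⁻ x in Set.Ioi (0:ℝ), ENNReal.ofReal ((k:ℝ)⁻¹ * S₀ x) := by
          apply lintegral_mono_ae
          filter_upwards [ae_restrict_mem measurableSet_Ioi] with x hx
          have hx0 : (0:ℝ) ≤ x := le_of_lt hx
          have hqint : Integrable (fun ω => q k ω x) P := by
            apply Integrable.mono' (integrable_const (4:ℝ))
              (hqmω k x).aestronglyMeasurable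
            apply Eventually.of_forall
            intro ω
            rw [Real.norm_eq_abs, abs_of_nonneg (sq_nonneg _)]
            have hF0 : 0 ≤ (k:ℝ)⁻¹ * ∑ j ∈ Finset.range k, (if x < Z j ω then (1:ℝ) else 0) := by
              apply mul_nonneg (by positivity)
              apply Finset.sum_nonneg
              intro j _
              split <;> norm_num
            have hF1 : (k:ℝ)⁻¹ * ∑ j ∈ Finset.range k, (if x < Z j ω then (1:ℝ) else 0) ≤ 1 := by
              have hsum : ∑ j ∈ Finset.range k, (if x < Z j ω then (1:ℝ) else 0) ≤ (k:ℝ) := by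
                calc ∑ j ∈ Finset.range k, (if x < Z j ω then (1:ℝ) else 0)
                    ≤ ∑ j ∈ Finset.range k, (1:ℝ) := by
                      apply Finset.sum_le_sum; intro j _; split <;> norm_num
                  _ = (k:ℝ) := by simp
              have hkpos : (0:ℝ) < (k:ℝ) := by exact_mod_cast hk
              calc (k:ℝ)⁻¹ * ∑ j ∈ Finset.range k, (if x < Z j ω then (1:ℝ) else 0)
                  ≤ (k:ℝ)⁻¹ * (k:ℝ) := by
                    apply mul_le_mul_of_nonneg_left hsum (by positivity)
                _ = 1 := inv_mul_cancel₀ hkpos.ne'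
            have hs0 := gpdSurvival_nonneg hγ₀ hσ₀ hx0
            have hs1 := gpdSurvival_le_one hγ₀ hσ₀ hx0
            rw [hq]
            simp only
            nlinarith
          have heq : ∫⁻ ω, ENNReal.ofReal (q k ω x) ∂P = ENNReal.ofReal (∫ ω, q k ω x ∂P) :=
            (ofReal_integral_eq_lintegral_ofReal hqint
              (Eventually.of_forall fun ω => sq_nonneg _)).symm
          rw [heq]
          apply ENNReal.ofReal_le_ofReal
          exact exp_sq_bound P Z hZmeas hZindep (fun j => hPx j x hx0)
            (gpdSurvival_nonneg hγ₀ hσ₀ hx0) k hk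
      _ = ENNReal.ofReal ((k:ℝ)⁻¹) * ∫⁻ x in Set.Ioi (0:ℝ), ENNReal.ofReal (S₀ x) := by
          rw [← lintegral_const_mul' _ _ ENNReal.ofReal_ne_top]
          congr 1
          ext x
          rw [← ENNReal.ofReal_mul hkinv0]
      _ = ENNReal.ofReal ((k:ℝ)⁻¹) * ENNReal.ofReal C := by
          congr 1
          rw [hCdef]
          exact (ofReal_integral_eq_lintegral_ofReal hS0int
            (by
              filter_upwards [ae_restrict_mem measurableSet_Ioi] with x hx
              exact gpdSurvival_nonneg hγ₀ hσ₀ (le_of_lt hx))).symm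
      _ = ENNReal.ofReal ((k:ℝ)⁻¹ * C) := (ENNReal.ofReal_mul hkinv0).symm
  -- Markov + squeeze
  have hsub : ∀ k, {ω | δ ≤ ∫ x in Set.Ioi (0:ℝ), q k ω x}
      ⊆ {ω | ENNReal.ofReal δ ≤ G k ω} := by
    intro k ω hω
    simp only [Set.mem_setOf_eq] at hω ⊢
    rw [hJG k ω] at hω
    exact ENNReal.ofReal_le_of_le_toReal hω
  have hbound : ∀ k, 1 ≤ k → P {ω | δ ≤ ∫ x in Set.Ioi (0:ℝ), q k ω x}
      ≤ ENNReal.ofReal ((k:ℝ)⁻¹ * C / δ) := by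
    intro k hk
    calc P {ω | δ ≤ ∫ x in Set.Ioi (0:ℝ), q k ω x}
        ≤ P {ω | ENNReal.ofReal δ ≤ G k ω} := measure_mono (hsub k)
      _ ≤ (∫⁻ ω, G k ω ∂P) / ENNReal.ofReal δ :=
          meas_ge_le_lintegral_div (hGmeas k).aemeasurable
            (ENNReal.ofReal_pos.mpr hδ).ne' ENNReal.ofReal_ne_top
      _ ≤ ENNReal.ofReal ((k:ℝ)⁻¹ * C) / ENNReal.ofReal δ :=
          ENNReal.div_le_div_right (hGb k hk) _
      _ = ENNReal.ofReal ((k:ℝ)⁻¹ * C / δ) := (ENNReal.ofReal_div_of_pos hδ).symm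
  have htend : Tendsto (fun k : ℕ => ENNReal.ofReal ((k:ℝ)⁻¹ * C / δ)) atTop (𝓝 0) := by
    rw [show (0:ENNReal) = ENNReal.ofReal 0 by simp]
    apply ENNReal.tendsto_ofReal
    have h := tendsto_inv_atTop_nhds_zero_nat.mul_const (C/δ)
    rw [zero_mul] at h
    apply h.congr
    intro k
    ring
  apply tendsto_of_tendsto_of_tendsto_of_le_of_le' tendsto_const_nhds htend
  · exact Eventually.of_forall fun k => zero_le'
  · filter_upwards [eventually_ge_atTop 1] with k hk
    exact hbound k hk

/-- consistency of near-minimizers of the empirical `L²`-distance criterion: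
any sequence of Θ-valued estimators whose criterion value is within `o_P(1)` of the value at
the true parameter `θ₀` converges to `θ₀` in probability, and the corresponding plug-in
survival function estimates converge in probability pointwise. -/
theorem mde_consistency {Ω : Type*} [MeasurableSpace Ω] (P : Measure Ω) [IsProbabilityMeasure P]
    (Θ : Set (ℝ × ℝ)) (hΘsub : Θ ⊆ Set.Ioo (0 : ℝ) 1 ×ˢ Set.Ioi (0 : ℝ)) (hΘcomp : IsCompact Θ)
    (θ₀ : ℝ × ℝ) (hθ₀ : θ₀ ∈ Θ)
    (Z : ℕ → Ω → ℝ) (hZmeas : ∀ i, Measurable (Z i))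
    (hZindep : ProbabilityTheory.iIndepFun Z P)
    (hZdist : ∀ i, Measure.map (Z i) P = gpdMeasure θ₀.1 θ₀.2)
    (J : ℕ → (ℝ × ℝ) → Ω → ℝ)
    (hJ : ∀ k θ ω, J k θ ω = ∫ x in Set.Ioi (0 : ℝ),
      ((k : ℝ)⁻¹ * ∑ j ∈ Finset.range k, (if x < Z j ω then (1 : ℝ) else 0)
        - gpdSurvival θ.1 θ.2 x) ^ 2)
    (θhat : ℕ → Ω → ℝ × ℝ) (hθhatMeas : ∀ k, Measurable (θhat k))
    (hθhatΘ : ∀ k ω, θhat k ω ∈ Θ)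
    (ε : ℕ → Ω → ℝ) (hεnonneg : ∀ k ω, 0 ≤ ε k ω)
    (hεto0 : TendstoInMeasure P ε atTop (fun _ => (0 : ℝ)))
    (hnearmin : ∀ k ω, J k (θhat k ω) ω ≤ J k θ₀ ω + ε k ω) :
    TendstoInMeasure P (fun k ω => θhat k ω) atTop (fun _ => θ₀) ∧
    ∀ x : ℝ, 0 ≤ x →
      TendstoInMeasure P (fun k ω => gpdSurvival (θhat k ω).1 (θhat k ω).2 x) atTop
        (fun _ => gpdSurvival θ₀.1 θ₀.2 x) := by

  -- positivity facts for θ₀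
  have hθ₀sub := hΘsub hθ₀
  have hγ₀ : 0 < θ₀.1 := hθ₀sub.1.1
  have hγ₀1 : θ₀.1 < 1 := hθ₀sub.1.2
  have hσ₀ : 0 < θ₀.2 := hθ₀sub.2
  -- box bounds from compactness
  obtain ⟨θa, hθaΘ, hθa⟩ := hΘcomp.exists_isMinOn ⟨θ₀, hθ₀⟩ continuous_fst.continuousOn
  obtain ⟨θb, hθbΘ, hθb⟩ := hΘcomp.exists_isMaxOn ⟨θ₀, hθ₀⟩ continuous_fst.continuousOn
  obtain ⟨θd, hθdΘ, hθd⟩ := hΘcomp.exists_isMaxOn ⟨θ₀, hθ₀⟩ continuous_snd.continuousOn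
  set a := θa.1 with hadef
  set b := θb.1 with hbdef
  set d := θd.2 with hddef
  have ha : 0 < a := (hΘsub hθaΘ).1.1
  have hb0 : 0 < b := (hΘsub hθbΘ).1.1
  have hb1 : b < 1 := (hΘsub hθbΘ).1.2
  have hd : 0 < d := (hΘsub hθdΘ).2
  have hboxa : ∀ θ ∈ Θ, a ≤ θ.1 := fun θ hθ => isMinOn_iff.mp hθa θ hθ
  have hboxb : ∀ θ ∈ Θ, θ.1 ≤ b := fun θ hθ => isMaxOn_iff.mp hθb θ hθ
  have hboxd : ∀ θ ∈ Θ, θ.2 ≤ d := fun θ hθ => isMaxOn_iff.mp hθd θ hθ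
  have hpos : ∀ θ ∈ Θ, 0 < θ.1 ∧ 0 < θ.2 := fun θ hθ => ⟨(hΘsub hθ).1.1, (hΘsub hθ).2⟩
  -- distribution of exceedances
  have hPx : ∀ j, ∀ x : ℝ, 0 ≤ x →
      P {ω | x < Z j ω} = ENNReal.ofReal (gpdSurvival θ₀.1 θ₀.2 x) := by
    intro j x hx
    have h1 : {ω | x < Z j ω} = Z j ⁻¹' (Set.Ioi x) := rfl
    rw [h1, ← Measure.map_apply (hZmeas j) measurableSet_Ioi, hZdist j,
      gpdMeasure_Ioi hγ₀ hσ₀ hx]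
  -- convergence of the criterion at the true parameter
  have hJ0 : ∀ δ : ℝ, 0 < δ →
      Tendsto (fun k => P {ω | δ ≤ J k θ₀ ω}) atTop (𝓝 0) := by
    intro δ hδ
    have := markov_step P Z hZmeas hZindep hγ₀ hγ₀1 hσ₀ hPx hδ
    apply this.congr
    intro k
    congr 1
    ext ω
    rw [Set.mem_setOf_eq, Set.mem_setOf_eq, hJ]
  -- the population criterion
  set Dfn : ℝ × ℝ → ℝ := fun θ =>
    ∫ x in Set.Ioi (0:ℝ), (gpdSurvival θ.1 θ.2 x - gpdSurvival θ₀.1 θ₀.2 x) ^ 2 with hDfn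
  set Bo : ℝ → ℝ := fun x => (1 + (a / d) * x) ^ (-(1/b) : ℝ) with hBo
  have hSle : ∀ θ ∈ Θ, ∀ x : ℝ, 0 ≤ x → gpdSurvival θ.1 θ.2 x ≤ Bo x := fun θ hθ x hx =>
    gpdSurvival_le_bound (c := 1) ha hd (hboxa θ hθ) (hboxb θ hθ) (hpos θ hθ).2
      (hboxd θ hθ) hb0 hx
  have hDcont : ContinuousOn Dfn Θ :=
    Dcont hγ₀ hσ₀ Θ hpos Bo hSle (fun x hx => hSle θ₀ hθ₀ x hx)
      (bound_sq_integrable ha hd hb0 hb1)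
  have hDpos : ∀ θ ∈ Θ, θ ≠ θ₀ → 0 < Dfn θ := by
    intro θ hθ hne
    apply Dpos hγ₀ hγ₀1 hσ₀ (hpos θ hθ).1 (hΘsub hθ).1.2 (hpos θ hθ).2
    intro ⟨h1, h2⟩
    exact hne (Prod.ext h1 h2)
  -- comparison of the population criterion with the empirical one
  have hDle : ∀ k ω, Dfn (θhat k ω) ≤ 4 * J k θ₀ ω + 2 * ε k ω := by
    intro k ω
    set θh := θhat k ω with hθh
    have hθhΘ := hθhatΘ k ω
    have hu : IntegrableOn (fun x => ((k:ℝ)⁻¹ * ∑ j ∈ Finset.range k,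
        (if x < Z j ω then (1:ℝ) else 0) - gpdSurvival θh.1 θh.2 x) ^ 2) (Set.Ioi (0:ℝ)) :=
      empirical_sq_integrable (fun j => Z j ω) k (hpos θh hθhΘ).1 (hΘsub hθhΘ).1.2
        (hpos θh hθhΘ).2
    have hv : IntegrableOn (fun x => ((k:ℝ)⁻¹ * ∑ j ∈ Finset.range k,
        (if x < Z j ω then (1:ℝ) else 0) - gpdSurvival θ₀.1 θ₀.2 x) ^ 2) (Set.Ioi (0:ℝ)) :=
      empirical_sq_integrable (fun j => Z j ω) k hγ₀ hγ₀1 hσ₀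
    have hmono : Dfn θh ≤ ∫ x in Set.Ioi (0:ℝ),
        (2 * ((k:ℝ)⁻¹ * ∑ j ∈ Finset.range k,
          (if x < Z j ω then (1:ℝ) else 0) - gpdSurvival θh.1 θh.2 x) ^ 2
        + 2 * ((k:ℝ)⁻¹ * ∑ j ∈ Finset.range k,
          (if x < Z j ω then (1:ℝ) else 0) - gpdSurvival θ₀.1 θ₀.2 x) ^ 2) := by
      apply integral_mono_of_nonneg
      · exact Eventually.of_forall fun x => sq_nonneg _
      · exact (hu.const_mul 2).add (hv.const_mul 2)
      · apply Eventually.of_forall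
        intro x
        simp only
        nlinarith [sq_nonneg (((k:ℝ)⁻¹ * ∑ j ∈ Finset.range k,
          (if x < Z j ω then (1:ℝ) else 0) - gpdSurvival θh.1 θh.2 x)
          + ((k:ℝ)⁻¹ * ∑ j ∈ Finset.range k,
          (if x < Z j ω then (1:ℝ) else 0) - gpdSurvival θ₀.1 θ₀.2 x))]
    have hsplit : ∫ x in Set.Ioi (0:ℝ),
        (2 * ((k:ℝ)⁻¹ * ∑ j ∈ Finset.range k,
          (if x < Z j ω then (1:ℝ) else 0) - gpdSurvival θh.1 θh.2 x) ^ 2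
        + 2 * ((k:ℝ)⁻¹ * ∑ j ∈ Finset.range k,
          (if x < Z j ω then (1:ℝ) else 0) - gpdSurvival θ₀.1 θ₀.2 x) ^ 2)
        = 2 * J k θh ω + 2 * J k θ₀ ω := by
      rw [integral_add (hu.const_mul 2) (hv.const_mul 2), integral_const_mul,
        integral_const_mul, hJ, hJ]
    have hnm := hnearmin k ω
    rw [← hθh] at hnm
    rw [hsplit] at hmono
    linarith
  -- conclusion 1
  have main1 : TendstoInMeasure P (fun k ω => θhat k ω) atTop (fun _ => θ₀) := by
    rw [tendstoInMeasure_iff_dist]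
    intro r hr
    obtain ⟨δ, hδ, hsep⟩ := Dsep hΘcomp hDcont hDpos hr
    have hsubset : ∀ k, {ω | r ≤ dist (θhat k ω) θ₀}
        ⊆ {ω | δ/8 ≤ J k θ₀ ω} ∪ {ω | δ/4 ≤ ε k ω} := by
      intro k ω hω
      simp only [Set.mem_setOf_eq] at hω
      by_contra hc
      simp only [Set.mem_union, Set.mem_setOf_eq, not_or, not_le] at hc
      have h1 : δ ≤ Dfn (θhat k ω) := hsep _ (hθhatΘ k ω) hω
      have h2 := hDle k ω
      linarith [hc.1, hc.2]
    have hJδ := hJ0 (δ/8) (by linarith)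
    have hεδ : Tendsto (fun k => P {ω | δ/4 ≤ ε k ω}) atTop (𝓝 0) := by
      have := tendstoInMeasure_iff_dist.mp hεto0 (δ/4) (by linarith)
      apply this.congr
      intro k
      congr 1
      ext ω
      simp only [Set.mem_setOf_eq, Real.dist_eq, sub_zero, abs_of_nonneg (hεnonneg k ω)]
    have hsum : Tendsto (fun k => P {ω | δ/8 ≤ J k θ₀ ω} + P {ω | δ/4 ≤ ε k ω})
        atTop (𝓝 0) := by
      have := hJδ.add hεδ
      simpa using this
    apply tendsto_of_tendsto_of_tendsto_of_le_of_le tendsto_const_nhds hsum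
    · intro k; exact zero_le'
    · intro k
      exact (measure_mono (hsubset k)).trans (measure_union_le _ _)
  refine ⟨main1, ?_⟩
  -- conclusion 2
  intro x hx
  rw [tendstoInMeasure_iff_dist]
  intro e he
  have hca := gpd_contTheta hx hγ₀ hσ₀
  obtain ⟨d', hd', hcont⟩ := Metric.continuousAt_iff.mp hca e he
  have hsubset : ∀ k, {ω | e ≤ dist (gpdSurvival (θhat k ω).1 (θhat k ω).2 x)
      (gpdSurvival θ₀.1 θ₀.2 x)} ⊆ {ω | d' ≤ dist (θhat k ω) θ₀} := by
    intro k ω hω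
    simp only [Set.mem_setOf_eq] at hω ⊢
    by_contra hc
    push_neg at hc
    exact absurd (hcont hc) (not_lt.mpr hω)
  apply tendsto_of_tendsto_of_tendsto_of_le_of_le tendsto_const_nhds (tendstoInMeasure_iff_dist.mp main1 d' hd')
  · intro k; exact zero_le'
  · intro k; exact measure_mono (hsubset k)
end

section
/- For every γ ∈ (0,1) and σ > 0, ∫₀^∞ ( ∫₀^u D_γ(y) dy ) f_{γ,σ}(u) du = −σ / ( 2(γ−2)² ), where D_γ(y) = −(1 + γy/σ)^{−1/γ} ( log(1 + γy/σ)/γ² − (y/(γσ))/(1 + γy/σ) ) is the partial derivative of F_{γ,σ}(y) with respect to γ. -/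
open Real MeasureTheory

/-- Partial derivative of the GPD cdf `F_{γ,σ}(y)` with respect to the shape parameter γ. -/
noncomputable def Dgamma (γ σ y : ℝ) : ℝ :=
  -(1 + γ * y / σ) ^ (-1 / γ : ℝ) *
    (Real.log (1 + γ * y / σ) / γ ^ 2 - (y / (γ * σ)) / (1 + γ * y / σ))

section GPDaux
open Filter Set Topology

lemma GPDaux_hasDerivAt_T (γ σ u : ℝ) : HasDerivAt (fun x => 1 + γ * x / σ) (γ / σ) u := by
  simpa using (((hasDerivAt_id u).const_mul γ).div_const σ).const_add 1

lemma GPDaux_tendsto_T (γ σ : ℝ) (hγ : 0 < γ) (hσ : 0 < σ) :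
    Tendsto (fun u => 1 + γ * u / σ) atTop atTop := by
  apply tendsto_atTop_add_const_left
  exact Tendsto.atTop_div_const hσ (tendsto_id.const_mul_atTop hγ)

lemma GPDaux_T_pos (γ σ : ℝ) (hγ : 0 < γ) (hσ : 0 < σ) {u : ℝ} (hu : 0 ≤ u) :
    0 < 1 + γ * u / σ := by
  have : 0 ≤ γ * u / σ := div_nonneg (mul_nonneg hγ.le hu) hσ.le
  linarith

lemma GPDaux_pow_deriv (γ σ : ℝ) (hγ : 0 < γ) (hσ : 0 < σ) (c : ℝ) (hc : c < -1) :
    ∀ u ∈ Ici (0:ℝ), HasDerivAt (fun x => σ / (γ * (c+1)) * (1 + γ * x / σ) ^ (c+1))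
      ((1 + γ * u / σ) ^ c) u := by
  intro u hu
  have hT := GPDaux_T_pos γ σ hγ hσ hu
  have h := ((GPDaux_hasDerivAt_T γ σ u).rpow_const (p := c+1)
    (Or.inl hT.ne')).const_mul (σ / (γ * (c+1)))
  convert h using 1
  · rfl
  · rfl
  rw [show c + 1 - 1 = c by ring]
  have hc1 : c + 1 ≠ 0 := by linarith
  field_simp

lemma GPDaux_pow_tendsto (γ σ : ℝ) (hγ : 0 < γ) (hσ : 0 < σ) (c : ℝ) (hc : c < -1) :
    Tendsto (fun u => σ / (γ * (c+1)) * (1 + γ * u / σ) ^ (c+1)) atTop (𝓝 0) := by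
  have h0 : Tendsto (fun x : ℝ => x ^ (c+1)) atTop (𝓝 0) := by
    have := tendsto_rpow_neg_atTop (y := -(c+1)) (by linarith)
    simpa using this
  have := (h0.comp (GPDaux_tendsto_T γ σ hγ hσ)).const_mul (σ / (γ * (c+1)))
  simpa using this

lemma GPDaux_pow_nonneg (γ σ : ℝ) (hγ : 0 < γ) (hσ : 0 < σ) (c : ℝ) :
    ∀ u ∈ Ioi (0:ℝ), 0 ≤ (1 + γ * u / σ) ^ c := fun u hu =>
  rpow_nonneg (GPDaux_T_pos γ σ hγ hσ (le_of_lt hu)).le c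

lemma GPDaux_pow_integrable (γ σ : ℝ) (hγ : 0 < γ) (hσ : 0 < σ) (c : ℝ) (hc : c < -1) :
    IntegrableOn (fun u => (1 + γ * u / σ) ^ c) (Ioi 0) :=
  integrableOn_Ioi_deriv_of_nonneg' (GPDaux_pow_deriv γ σ hγ hσ c hc)
    (GPDaux_pow_nonneg γ σ hγ hσ c) (GPDaux_pow_tendsto γ σ hγ hσ c hc)

lemma GPDaux_pow_integral (γ σ : ℝ) (hγ : 0 < γ) (hσ : 0 < σ) (c : ℝ) (hc : c < -1) :
    ∫ u in Ioi (0:ℝ), (1 + γ * u / σ) ^ c = -σ / (γ * (c+1)) := by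
  rw [integral_Ioi_of_hasDerivAt_of_nonneg' (GPDaux_pow_deriv γ σ hγ hσ c hc)
    (GPDaux_pow_nonneg γ σ hγ hσ c) (GPDaux_pow_tendsto γ σ hγ hσ c hc)]
  norm_num; ring

lemma GPDaux_powlog_deriv (γ σ : ℝ) (hγ : 0 < γ) (hσ : 0 < σ) (c : ℝ) (hc : c < -1) :
    ∀ u ∈ Ici (0:ℝ), HasDerivAt (fun x => σ / γ * ((1 + γ * x / σ) ^ (c+1) *
      (Real.log (1 + γ * x / σ) / (c+1) - 1 / (c+1)^2)))
      ((1 + γ * u / σ) ^ c * Real.log (1 + γ * u / σ)) u := by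
  intro u hu
  have hT := GPDaux_T_pos γ σ hγ hσ hu
  have hd := GPDaux_hasDerivAt_T γ σ u
  have h1 := hd.rpow_const (p := c+1) (Or.inl hT.ne')
  have h2 := ((hd.log hT.ne').div_const (c+1)).sub_const (1 / (c+1)^2)
  have h := (h1.mul h2).const_mul (σ / γ)
  convert h using 1
  · rfl
  · rfl
  · rfl
  rw [show c + 1 - 1 = c by ring, Real.rpow_add_one hT.ne' c]
  have hc1 : c + 1 ≠ 0 := by linarith
  have hne := hT.ne'
  generalize (1 + γ * u / σ) = t at hne ⊢
  field_simp
  ring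

lemma GPDaux_powlog_tendsto (γ σ : ℝ) (hγ : 0 < γ) (hσ : 0 < σ) (c : ℝ) (hc : c < -1) :
    Tendsto (fun u => σ / γ * ((1 + γ * u / σ) ^ (c+1) *
      (Real.log (1 + γ * u / σ) / (c+1) - 1 / (c+1)^2))) atTop (𝓝 0) := by
  have h0 : Tendsto (fun x : ℝ => x ^ (c+1) * Real.log x) atTop (𝓝 0) := by
    have hlt : (0:ℝ) < -(c+1) := by linarith
    have h := (isLittleO_log_rpow_atTop hlt).tendsto_div_nhds_zero
    apply h.congr' ((eventually_gt_atTop 0).mono fun x hx => ?_)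
    rw [div_eq_mul_inv, ← Real.rpow_neg hx.le, neg_neg, mul_comm]
  have h1 : Tendsto (fun x : ℝ => x ^ (c+1)) atTop (𝓝 0) := by
    simpa using tendsto_rpow_neg_atTop (y := -(c+1)) (by linarith)
  have hT := GPDaux_tendsto_T γ σ hγ hσ
  have htot : Tendsto (fun u => (1 + γ * u / σ) ^ (c+1) *
      (Real.log (1 + γ * u / σ) / (c+1) - 1 / (c+1)^2)) atTop (𝓝 0) := by
    have hA := ((h0.comp hT).div_const (c+1))
    have hB := (h1.comp hT).const_mul (1 / (c+1)^2)
    have := hA.sub hB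
    simp only [Function.comp] at this hA hB ⊢
    convert this using 2 with u
    · ring
    · norm_num
  simpa using htot.const_mul (σ / γ)

lemma GPDaux_powlog_nonneg (γ σ : ℝ) (hγ : 0 < γ) (hσ : 0 < σ) (c : ℝ) :
    ∀ u ∈ Ioi (0:ℝ), 0 ≤ (1 + γ * u / σ) ^ c * Real.log (1 + γ * u / σ) := by
  intro u hu
  have hT := GPDaux_T_pos γ σ hγ hσ (le_of_lt hu)
  have hlog : 0 ≤ Real.log (1 + γ * u / σ) := by
    apply Real.log_nonneg
    have : 0 ≤ γ * u / σ := div_nonneg (mul_nonneg hγ.le (le_of_lt hu)) hσ.le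
    linarith
  exact mul_nonneg (rpow_nonneg hT.le c) hlog

lemma GPDaux_powlog_integrable (γ σ : ℝ) (hγ : 0 < γ) (hσ : 0 < σ) (c : ℝ) (hc : c < -1) :
    IntegrableOn (fun u => (1 + γ * u / σ) ^ c * Real.log (1 + γ * u / σ)) (Ioi 0) :=
  integrableOn_Ioi_deriv_of_nonneg' (GPDaux_powlog_deriv γ σ hγ hσ c hc)
    (GPDaux_powlog_nonneg γ σ hγ hσ c) (GPDaux_powlog_tendsto γ σ hγ hσ c hc)

lemma GPDaux_powlog_integral (γ σ : ℝ) (hγ : 0 < γ) (hσ : 0 < σ) (c : ℝ) (hc : c < -1) :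
    ∫ u in Ioi (0:ℝ), (1 + γ * u / σ) ^ c * Real.log (1 + γ * u / σ) = σ / (γ * (c+1)^2) := by
  rw [integral_Ioi_of_hasDerivAt_of_nonneg' (GPDaux_powlog_deriv γ σ hγ hσ c hc)
    (GPDaux_powlog_nonneg γ σ hγ hσ c) (GPDaux_powlog_tendsto γ σ hγ hσ c hc)]
  have hc1 : c + 1 ≠ 0 := by linarith
  norm_num
  field_simp

noncomputable def GPDaux_G (γ σ u : ℝ) : ℝ :=
  -σ / γ ^ 3 * ((1 + γ * u / σ) ^ (-1 / γ + 1 : ℝ) *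
    (Real.log (1 + γ * u / σ) * (γ / (γ - 1)) - ((γ / (γ - 1)) ^ 2 + γ / (γ - 1))) -
    γ * (1 + γ * u / σ) ^ (-1 / γ : ℝ))

lemma GPDaux_G_deriv (γ σ : ℝ) (hγ0 : 0 < γ) (hγ1 : γ < 1) (hσ : 0 < σ) :
    ∀ x ∈ Ici (0:ℝ), HasDerivAt (GPDaux_G γ σ) (Dgamma γ σ x) x := by
  intro x hx
  have hT := GPDaux_T_pos γ σ hγ0 hσ hx
  have hne := hT.ne'
  have hd := GPDaux_hasDerivAt_T γ σ x
  have h1 := hd.rpow_const (p := -1/γ + 1) (Or.inl hne)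
  have h2 := ((hd.log hne).mul_const (γ / (γ - 1))).sub_const ((γ / (γ - 1)) ^ 2 + γ / (γ - 1))
  have h3 := hd.rpow_const (p := -1/γ) (Or.inl hne)
  have h := ((h1.mul h2).sub ((h3.const_mul γ))).const_mul (-σ / γ ^ 3)
  convert h using 1
  · rfl
  · rfl
  · rfl
  rw [show (-1/γ + 1 - 1 : ℝ) = -1/γ by ring,
      Real.rpow_add_one hne, Real.rpow_sub_one hne]
  simp only [Dgamma]
  rw [show x / (γ * σ) = ((1 + γ * x / σ) - 1) / γ ^ 2 by field_simp; ring]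
  have hγ1' : γ - 1 ≠ 0 := by linarith
  generalize (1 + γ * x / σ) = t at hne ⊢
  field_simp
  ring

lemma GPDaux_Dgamma_contOn (γ σ : ℝ) (hγ0 : 0 < γ) (hσ : 0 < σ) {u : ℝ} :
    ContinuousOn (Dgamma γ σ) (Icc 0 u) := by
  have hTc : ContinuousOn (fun y : ℝ => 1 + γ * y / σ) (Icc 0 u) := by fun_prop
  have hTne : ∀ y ∈ Icc (0:ℝ) u, 1 + γ * y / σ ≠ 0 := fun y hy =>
    (GPDaux_T_pos γ σ hγ0 hσ hy.1).ne'
  have h1 : ContinuousOn (fun y : ℝ => (1 + γ * y / σ) ^ (-1 / γ : ℝ)) (Icc 0 u) :=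
    hTc.rpow_const fun y hy => Or.inl (hTne y hy)
  have h2 : ContinuousOn (fun y : ℝ => Real.log (1 + γ * y / σ) / γ ^ 2) (Icc 0 u) :=
    (hTc.log hTne).div_const _
  have h3 : ContinuousOn (fun y : ℝ => (y / (γ * σ)) / (1 + γ * y / σ)) (Icc 0 u) :=
    ContinuousOn.div (by fun_prop) hTc hTne
  exact h1.neg.mul (h2.sub h3)

lemma GPDaux_inner_eq (γ σ : ℝ) (hγ0 : 0 < γ) (hγ1 : γ < 1) (hσ : 0 < σ) {u : ℝ} (hu : 0 ≤ u) :
    ∫ y in (0:ℝ)..u, Dgamma γ σ y = GPDaux_G γ σ u - GPDaux_G γ σ 0 := by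
  apply intervalIntegral.integral_eq_sub_of_hasDerivAt
  · intro x hx
    rw [uIcc_of_le hu] at hx
    exact GPDaux_G_deriv γ σ hγ0 hγ1 hσ x hx.1
  · apply ContinuousOn.intervalIntegrable
    rw [uIcc_of_le hu]
    exact GPDaux_Dgamma_contOn γ σ hγ0 hσ

end GPDaux

/-- `∫₀^∞ (∫₀^u D_γ(y) dy) f_{γ,σ}(u) du = -σ / (2(γ-2)²)`. -/
theorem integral_integral_Dgamma (γ : ℝ) (hγ : γ ∈ Set.Ioo (0 : ℝ) 1) (σ : ℝ) (hσ : 0 < σ) :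
    ∫ u in Set.Ioi (0 : ℝ), (∫ y in (0 : ℝ)..u, Dgamma γ σ y) * gpdPdf γ σ u =
      -σ / (2 * (γ - 2) ^ 2) := by
  obtain ⟨hγ0, hγ1⟩ := hγ
  have hγ1' : γ - 1 ≠ 0 := by linarith
  have hγ2 : γ - 2 ≠ 0 := by linarith
  have hinvγ : 1 < 1/γ := by rw [lt_div_iff₀ hγ0]; linarith
  have hm : (-1/γ : ℝ) < -1 := by rw [show (-1/γ : ℝ) = -(1/γ) by ring]; linarith
  have hc1 : ((-1/γ + 1) + (-1/γ - 1) : ℝ) < -1 := by linarith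
  have hc2 : ((-1/γ) + (-1/γ - 1) : ℝ) < -1 := by linarith
  have hc3 : (-1/γ - 1 : ℝ) < -1 := by linarith
  have key : ∀ u ∈ Set.Ioi (0:ℝ),
      (∫ y in (0 : ℝ)..u, Dgamma γ σ y) * gpdPdf γ σ u =
      (-(γ / (γ - 1)) / γ ^ 3) *
        ((1 + γ * u / σ) ^ ((-1/γ + 1) + (-1/γ - 1) : ℝ) * Real.log (1 + γ * u / σ)) +
      ((((γ / (γ - 1)) ^ 2 + γ / (γ - 1)) / γ ^ 3) *
        (1 + γ * u / σ) ^ ((-1/γ + 1) + (-1/γ - 1) : ℝ) +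
      ((1 / γ ^ 2) * (1 + γ * u / σ) ^ ((-1/γ) + (-1/γ - 1) : ℝ) +
       (-(((γ / (γ - 1)) ^ 2 + γ / (γ - 1)) + γ) / γ ^ 3) *
        (1 + γ * u / σ) ^ (-1/γ - 1 : ℝ))) := by
    intro u hu
    have hu' : (0:ℝ) ≤ u := le_of_lt hu
    have hT := GPDaux_T_pos γ σ hγ0 hσ hu'
    rw [GPDaux_inner_eq γ σ hγ0 hγ1 hσ hu']
    have hG0 : GPDaux_G γ σ 0 = σ / γ ^ 3 * (((γ / (γ - 1)) ^ 2 + γ / (γ - 1)) + γ) := by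
      simp [GPDaux_G]
      ring
    rw [hG0]
    simp only [GPDaux_G, gpdPdf]
    rw [Real.rpow_add hT (-1/γ + 1) (-1/γ - 1), Real.rpow_add hT (-1/γ) (-1/γ - 1)]
    generalize (1 + γ * u / σ) ^ (-1/γ + 1 : ℝ) = X
    generalize (1 + γ * u / σ) ^ (-1/γ : ℝ) = Z
    generalize (1 + γ * u / σ) ^ (-1/γ - 1 : ℝ) = Y
    generalize Real.log (1 + γ * u / σ) = L
    field_simp
    ring
  rw [MeasureTheory.setIntegral_congr_fun measurableSet_Ioi key]
  have iA := (GPDaux_powlog_integrable γ σ hγ0 hσ _ hc1).const_mul (-(γ / (γ - 1)) / γ ^ 3)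
  have iB := (GPDaux_pow_integrable γ σ hγ0 hσ _ hc1).const_mul
    ((((γ / (γ - 1)) ^ 2 + γ / (γ - 1))) / γ ^ 3)
  have iC := (GPDaux_pow_integrable γ σ hγ0 hσ _ hc2).const_mul (1 / γ ^ 2)
  have iE := (GPDaux_pow_integrable γ σ hγ0 hσ _ hc3).const_mul
    (-(((γ / (γ - 1)) ^ 2 + γ / (γ - 1)) + γ) / γ ^ 3)
  have iCE : Integrable (fun x : ℝ =>
      (1 / γ ^ 2) * (1 + γ * x / σ) ^ ((-1/γ) + (-1/γ - 1) : ℝ) +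
      (-(((γ / (γ - 1)) ^ 2 + γ / (γ - 1)) + γ) / γ ^ 3) *
        (1 + γ * x / σ) ^ (-1/γ - 1 : ℝ)) (volume.restrict (Set.Ioi 0)) := iC.add iE
  have iBCE : Integrable (fun x : ℝ =>
      (((γ / (γ - 1)) ^ 2 + γ / (γ - 1)) / γ ^ 3) *
        (1 + γ * x / σ) ^ ((-1/γ + 1) + (-1/γ - 1) : ℝ) +
      ((1 / γ ^ 2) * (1 + γ * x / σ) ^ ((-1/γ) + (-1/γ - 1) : ℝ) +
      (-(((γ / (γ - 1)) ^ 2 + γ / (γ - 1)) + γ) / γ ^ 3) *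
        (1 + γ * x / σ) ^ (-1/γ - 1 : ℝ))) (volume.restrict (Set.Ioi 0)) := iB.add iCE
  rw [MeasureTheory.integral_add iA iBCE]
  rw [MeasureTheory.integral_add iB iCE]
  rw [MeasureTheory.integral_add iC iE]
  rw [MeasureTheory.integral_const_mul _ _, MeasureTheory.integral_const_mul _ _,
      MeasureTheory.integral_const_mul _ _, MeasureTheory.integral_const_mul _ _,
      GPDaux_powlog_integral γ σ hγ0 hσ _ hc1,
      GPDaux_pow_integral γ σ hγ0 hσ _ hc1,
      GPDaux_pow_integral γ σ hγ0 hσ _ hc2,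
      GPDaux_pow_integral γ σ hγ0 hσ _ hc3]
  rw [show ((-1/γ + 1) + (-1/γ - 1) + 1 : ℝ) = (γ-2)/γ by
        rw [eq_div_iff hγ0.ne']; field_simp; ring,
      show ((-1/γ) + (-1/γ - 1) + 1 : ℝ) = -2/γ by
        rw [eq_div_iff hγ0.ne']; field_simp; linarith,
      show (-1/γ - 1 + 1 : ℝ) = -1/γ by ring]
  have hγ2' : (γ-2)/γ ≠ 0 := div_ne_zero hγ2 hγ0.ne'
  field_simp
  ring
end

section
/- For every γ ∈ (0,1) and σ > 0, ∫₀^∞ ( ∫₀^u D_σ(y) dy ) f_{γ,σ}(u) du = 1 / ( 2(γ−2) ), where D_σ(y) = −(y/σ²)(1 + γy/σ)^{−1/γ − 1} is the partial derivative of F_{γ,σ}(y) with respect to σ. -/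
open Real MeasureTheory

/-- Partial derivative of the GPD cdf `F_{γ,σ}(y)` with respect to the scale parameter σ. -/
noncomputable def Dsigma (γ σ y : ℝ) : ℝ :=
  -(y / σ ^ 2) * (1 + γ * y / σ) ^ (-1 / γ - 1 : ℝ)

/-- Antiderivative of `Dsigma γ σ`. -/
noncomputable def Gfun (γ σ y : ℝ) : ℝ :=
  -(1 / (γ * (γ - 1))) * (1 + γ * y / σ) ^ (1 - 1 / γ : ℝ)
    - (1 / γ) * (1 + γ * y / σ) ^ (-1 / γ : ℝ)

/-- Antiderivative of `(Gfun γ σ u - Gfun γ σ 0) * gpdPdf γ σ u`. -/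
noncomputable def Hfun (γ σ u : ℝ) : ℝ :=
  -(1 / (γ * (γ - 1) * (γ - 2))) * (1 + γ * u / σ) ^ (1 - 2 / γ : ℝ)
    + (1 / (2 * γ)) * (1 + γ * u / σ) ^ (-2 / γ : ℝ)
    - (1 / (γ * (γ - 1)) + 1 / γ) * (1 + γ * u / σ) ^ (-1 / γ : ℝ)

lemma gpd_base_deriv (γ σ : ℝ) (p x : ℝ) (hx : (0:ℝ) < 1 + γ * x / σ) :
    HasDerivAt (fun u => (1 + γ * u / σ) ^ (p : ℝ))
      (p * (1 + γ * x / σ) ^ (p - 1 : ℝ) * (γ / σ)) x := by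
  have h1 : HasDerivAt (fun u : ℝ => 1 + γ * u / σ) (γ / σ) x := by
    have := (((hasDerivAt_id x).const_mul γ).div_const σ).const_add 1
    simpa using this
  have := h1.rpow_const (p := p) (Or.inl hx.ne')
  simpa [mul_comm, mul_assoc, mul_left_comm] using this

lemma hasDerivAt_Gfun (γ : ℝ) (hγ : γ ∈ Set.Ioo (0 : ℝ) 1) (σ : ℝ) (hσ : 0 < σ)
    (x : ℝ) (hx : 0 ≤ x) : HasDerivAt (Gfun γ σ) (Dsigma γ σ x) x := by
  obtain ⟨hγ0, hγ1⟩ := hγ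
  have ht : (0:ℝ) < 1 + γ * x / σ := by positivity
  have d1 := gpd_base_deriv γ σ (1 - 1/γ) x ht
  have d2 := gpd_base_deriv γ σ (-1/γ) x ht
  have := (d1.const_mul (-(1 / (γ * (γ - 1))))).sub (d2.const_mul (1 / γ))
  refine this.congr_deriv (Eq.symm ?_)
  have e1 : (1 + γ * x / σ) ^ (1 - 1/γ - 1 : ℝ)
      = (1 + γ * x / σ) ^ (-1/γ - 1 : ℝ) * (1 + γ * x / σ) := by
    rw [← Real.rpow_add_one ht.ne']; congr 1; ring
  simp only [Dsigma, e1]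
  generalize (1 + γ * x / σ) ^ (-1/γ - 1 : ℝ) = A
  have hγ1' : γ - 1 ≠ 0 := by intro h; nlinarith
  field_simp
  ring

lemma hasDerivAt_Hfun (γ : ℝ) (hγ : γ ∈ Set.Ioo (0 : ℝ) 1) (σ : ℝ) (hσ : 0 < σ)
    (x : ℝ) (hx : 0 ≤ x) :
    HasDerivAt (Hfun γ σ) ((Gfun γ σ x - Gfun γ σ 0) * gpdPdf γ σ x) x := by
  obtain ⟨hγ0, hγ1⟩ := hγ
  have ht : (0:ℝ) < 1 + γ * x / σ := by positivity
  have d1 := gpd_base_deriv γ σ (1 - 2/γ) x ht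
  have d2 := gpd_base_deriv γ σ (-2/γ) x ht
  have d3 := gpd_base_deriv γ σ (-1/γ) x ht
  have := ((d1.const_mul (-(1 / (γ * (γ - 1) * (γ - 2))))).add
    (d2.const_mul (1 / (2 * γ)))).sub (d3.const_mul (1 / (γ * (γ - 1)) + 1 / γ))
  refine this.congr_deriv (Eq.symm ?_)
  have r1 : (1 + γ * x / σ) ^ (1 - 1/γ : ℝ)
      = (1 + γ * x / σ) ^ (-1/γ : ℝ) * (1 + γ * x / σ) := by
    rw [← Real.rpow_add_one ht.ne']; congr 1; ring
  have r2 : (1 + γ * x / σ) ^ (-1/γ - 1 : ℝ)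
      = (1 + γ * x / σ) ^ (-1/γ : ℝ) / (1 + γ * x / σ) := by
    rw [eq_div_iff ht.ne', ← Real.rpow_add_one ht.ne']; congr 1; ring
  have r3 : (1 + γ * x / σ) ^ (1 - 2/γ - 1 : ℝ)
      = (1 + γ * x / σ) ^ (-1/γ : ℝ) * (1 + γ * x / σ) ^ (-1/γ : ℝ) := by
    rw [← Real.rpow_add ht]; congr 1; ring
  have r4 : (1 + γ * x / σ) ^ (-2/γ - 1 : ℝ)
      = (1 + γ * x / σ) ^ (-1/γ : ℝ) * (1 + γ * x / σ) ^ (-1/γ : ℝ)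
        / (1 + γ * x / σ) := by
    rw [eq_div_iff ht.ne', ← Real.rpow_add ht, ← Real.rpow_add_one ht.ne']; congr 1; ring
  simp only [Gfun, gpdPdf, mul_zero, zero_div, add_zero, Real.one_rpow]
  rw [r1, r2, r3, r4]
  generalize (1 + γ * x / σ) ^ (-1/γ : ℝ) = B
  have hγ1' : γ - 1 ≠ 0 := by intro h; nlinarith
  have hγ2' : γ - 2 ≠ 0 := by intro h; nlinarith
  field_simp
  ring

lemma inner_eq (γ : ℝ) (hγ : γ ∈ Set.Ioo (0 : ℝ) 1) (σ : ℝ) (hσ : 0 < σ)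
    (u : ℝ) (hu : 0 ≤ u) :
    ∫ y in (0 : ℝ)..u, Dsigma γ σ y = Gfun γ σ u - Gfun γ σ 0 := by
  apply intervalIntegral.integral_eq_sub_of_hasDerivAt
  · intro x hx
    rw [Set.uIcc_of_le hu] at hx
    exact hasDerivAt_Gfun γ hγ σ hσ x hx.1
  · apply ContinuousOn.intervalIntegrable
    have hbase : ∀ y ∈ Set.uIcc (0:ℝ) u, (0:ℝ) < 1 + γ * y / σ := by
      intro y hy
      rw [Set.uIcc_of_le hu] at hy
      have : 0 ≤ γ * y / σ := div_nonneg (mul_nonneg hγ.1.le hy.1) hσ.le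
      linarith
    show ContinuousOn (fun y => -(y / σ ^ 2) * (1 + γ * y / σ) ^ (-1 / γ - 1 : ℝ)) _
    apply ContinuousOn.mul
    · fun_prop
    · apply ContinuousOn.rpow_const
      · fun_prop
      · intro y hy
        exact Or.inl (hbase y hy).ne'

/-- `∫₀^∞ (∫₀^u D_σ(y) dy) f_{γ,σ}(u) du = 1 / (2(γ-2))`. -/
theorem integral_integral_Dsigma (γ : ℝ) (hγ : γ ∈ Set.Ioo (0 : ℝ) 1) (σ : ℝ) (hσ : 0 < σ) :
    ∫ u in Set.Ioi (0 : ℝ), (∫ y in (0 : ℝ)..u, Dsigma γ σ y) * gpdPdf γ σ u =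
      1 / (2 * (γ - 2)) := by
  obtain ⟨hγ0, hγ1⟩ := hγ
  have hγmem : γ ∈ Set.Ioo (0:ℝ) 1 := ⟨hγ0, hγ1⟩
  have hγ1' : γ - 1 ≠ 0 := by intro h; nlinarith
  have hγ2' : γ - 2 ≠ 0 := by intro h; nlinarith
  -- limit of Hfun at infinity
  have tendsto_t : Filter.Tendsto (fun u : ℝ => 1 + γ * u / σ) Filter.atTop Filter.atTop := by
    apply Filter.tendsto_atTop_add_const_left
    apply Filter.Tendsto.atTop_div_const hσ
    exact Filter.Tendsto.const_mul_atTop hγ0 Filter.tendsto_id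
  have T : ∀ p : ℝ, p < 0 →
      Filter.Tendsto (fun u : ℝ => (1 + γ * u / σ) ^ (p : ℝ)) Filter.atTop (nhds 0) := by
    intro p hp
    have h1 : (0:ℝ) < -p := by linarith
    have h2 := (tendsto_rpow_neg_atTop h1).comp tendsto_t
    simp only [Function.comp_def, neg_neg] at h2
    exact h2
  have T1 := T (1 - 2/γ) (by
    have : (2:ℝ) < 2 / γ := by rw [lt_div_iff₀ hγ0]; nlinarith
    linarith)
  have T2 := T (-2/γ) (by
    have : (0:ℝ) < 2 / γ := by positivity
    simp only [neg_div]; linarith)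
  have T3 := T (-1/γ) (by
    have : (0:ℝ) < 1 / γ := by positivity
    simp only [neg_div]; linarith)
  have htends : Filter.Tendsto (Hfun γ σ) Filter.atTop (nhds 0) := by
    have := ((T1.const_mul (-(1 / (γ * (γ - 1) * (γ - 2))))).add
      (T2.const_mul (1 / (2 * γ)))).sub (T3.const_mul (1 / (γ * (γ - 1)) + 1 / γ))
    rw [show (0:ℝ) = -(1 / (γ * (γ - 1) * (γ - 2))) * 0 + (1 / (2 * γ)) * 0
      - (1 / (γ * (γ - 1)) + 1 / γ) * 0 by ring]
    exact this
  have hcont : ContinuousWithinAt (Hfun γ σ) (Set.Ici 0) 0 :=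
    (hasDerivAt_Hfun γ hγmem σ hσ 0 le_rfl).continuousAt.continuousWithinAt
  have hderiv : ∀ x ∈ Set.Ioi (0:ℝ), HasDerivAt (Hfun γ σ)
      ((∫ y in (0 : ℝ)..x, Dsigma γ σ y) * gpdPdf γ σ x) x := by
    intro x hx
    rw [inner_eq γ hγmem σ hσ x (le_of_lt hx)]
    exact hasDerivAt_Hfun γ hγmem σ hσ x (le_of_lt hx)
  have hneg : ∀ x ∈ Set.Ioi (0:ℝ),
      (∫ y in (0 : ℝ)..x, Dsigma γ σ y) * gpdPdf γ σ x ≤ 0 := by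
    intro x hx
    have h1 : (∫ y in (0 : ℝ)..x, Dsigma γ σ y) ≤ 0 := by
      have hnn : 0 ≤ ∫ y in (0 : ℝ)..x, -Dsigma γ σ y := by
        apply intervalIntegral.integral_nonneg (le_of_lt hx)
        intro y hy
        have hb : (0:ℝ) ≤ 1 + γ * y / σ := by
          have : 0 ≤ γ * y / σ := div_nonneg (mul_nonneg hγ0.le hy.1) hσ.le
          linarith
        simp only [Dsigma, neg_mul, neg_neg]
        exact mul_nonneg (div_nonneg hy.1 (sq_nonneg σ)) (Real.rpow_nonneg hb _)
      rw [intervalIntegral.integral_neg] at hnn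
      linarith
    have h2 : 0 ≤ gpdPdf γ σ x := by
      have hb : (0:ℝ) ≤ 1 + γ * x / σ := by
        have hx' : (0:ℝ) ≤ x := le_of_lt hx
        have : 0 ≤ γ * x / σ := div_nonneg (mul_nonneg hγ0.le hx') hσ.le
        linarith
      exact mul_nonneg (inv_nonneg.2 hσ.le) (Real.rpow_nonneg hb _)
    exact mul_nonpos_iff.mpr (Or.inr ⟨h1, h2⟩)
  have key := integral_Ioi_of_hasDerivAt_of_nonpos hcont hderiv hneg htends
  rw [key]
  simp only [Hfun, mul_zero, zero_div, add_zero, Real.one_rpow]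
  field_simp
  ring
end

section
/- For every γ ∈ (0,1) and σ > 0, the estimating function ψ is unbiased at the true parameter: ∫₀^∞ ψ_γ(x; γ, σ) f_{γ,σ}(x) dx = 0 and ∫₀^∞ ψ_σ(x; γ, σ) f_{γ,σ}(x) dx = 0. -/
open Real MeasureTheory Set Filter Topology

private lemma tendsto_rpow_mul_log_aux {s : ℝ} (hs : s < 0) :
    Tendsto (fun u : ℝ => u ^ s * Real.log u) atTop (𝓝 0) := by
  have h := (isLittleO_log_rpow_atTop (show (0:ℝ) < -s by linarith)).tendsto_div_nhds_zero
  apply h.congr'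
  filter_upwards [eventually_gt_atTop (0:ℝ)] with u hu
  rw [Real.rpow_neg hu.le, div_eq_mul_inv, inv_inv, mul_comm]

private lemma gpd_base_tendsto {γ σ : ℝ} (hγ : 0 < γ) (hσ : 0 < σ) :
    Tendsto (fun x : ℝ => 1 + γ * x / σ) atTop atTop := by
  apply tendsto_atTop_add_const_left
  exact (tendsto_id.const_mul_atTop hγ).atTop_div_const hσ

private lemma J_lemma {γ σ : ℝ} (hγ : 0 < γ) (hσ : 0 < σ) (p : ℝ) (hp : p < -1) :
    IntegrableOn (fun x : ℝ => (1 + γ * x / σ) ^ p) (Set.Ioi 0) ∧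
      ∫ x in Set.Ioi (0:ℝ), (1 + γ * x / σ) ^ p = -(σ / (γ * (p + 1))) := by
  have hp1 : p + 1 ≠ 0 := by intro h; nlinarith
  set g : ℝ → ℝ := fun x => (1 + γ * x / σ) ^ (p+1) * (σ / (γ * (p + 1))) with hg
  have hderiv : ∀ x ∈ Ici (0:ℝ), HasDerivAt g ((1 + γ * x / σ) ^ p) x := by
    intro x hx
    have hx0 : (0:ℝ) ≤ x := hx
    have hu : 0 < 1 + γ * x / σ := by positivity
    have h1 : HasDerivAt (fun x : ℝ => 1 + γ * x / σ) (γ / σ) x := by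
      simpa using (((hasDerivAt_id x).const_mul γ).div_const σ).const_add 1
    have h2 := (h1.rpow_const (p := p + 1) (Or.inl hu.ne')).mul_const (σ / (γ * (p + 1)))
    refine h2.congr_deriv ?_
    rw [show p + 1 - 1 = p by ring]
    field_simp
  have hnonneg : ∀ x ∈ Ioi (0:ℝ), 0 ≤ (1 + γ * x / σ) ^ p := by
    intro x hx
    have hx0 : (0:ℝ) < x := hx
    positivity
  have htend : Tendsto g atTop (𝓝 0) := by
    have h := ((tendsto_rpow_neg_atTop (show (0:ℝ) < -(p+1) by linarith)).comp
      (gpd_base_tendsto hγ hσ)).mul_const (σ / (γ * (p + 1)))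
    simpa [hg, neg_neg, Function.comp] using h
  refine ⟨integrableOn_Ioi_deriv_of_nonneg' hderiv hnonneg htend, ?_⟩
  rw [integral_Ioi_of_hasDerivAt_of_nonneg' hderiv hnonneg htend]
  simp [hg]

private lemma K_lemma {γ σ : ℝ} (hγ : 0 < γ) (hσ : 0 < σ) (p : ℝ) (hp : p < -1) :
    IntegrableOn (fun x : ℝ => (1 + γ * x / σ) ^ p * Real.log (1 + γ * x / σ)) (Set.Ioi 0) ∧
      ∫ x in Set.Ioi (0:ℝ), (1 + γ * x / σ) ^ p * Real.log (1 + γ * x / σ)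
        = σ / (γ * (p + 1) ^ 2) := by
  have hp1 : p + 1 ≠ 0 := by intro h; nlinarith
  set g : ℝ → ℝ := fun x =>
      (1 + γ * x / σ) ^ (p+1) * Real.log (1 + γ * x / σ) / (γ / σ * (p + 1))
        - (1 + γ * x / σ) ^ (p+1) / (γ / σ * (p + 1) ^ 2) with hg
  have hderiv : ∀ x ∈ Ici (0:ℝ),
      HasDerivAt g ((1 + γ * x / σ) ^ p * Real.log (1 + γ * x / σ)) x := by
    intro x hx
    have hx0 : (0:ℝ) ≤ x := hx
    have hu : 0 < 1 + γ * x / σ := by positivity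
    have h1 : HasDerivAt (fun x : ℝ => 1 + γ * x / σ) (γ / σ) x := by
      simpa using (((hasDerivAt_id x).const_mul γ).div_const σ).const_add 1
    have h2 := h1.rpow_const (p := p + 1) (Or.inl hu.ne')
    have h3 := h1.log hu.ne'
    have h4 := ((h2.mul h3).div_const (γ / σ * (p + 1))).sub
      (h2.div_const (γ / σ * (p + 1) ^ 2))
    refine h4.congr_deriv ?_
    rw [show p + 1 - 1 = p by ring, Real.rpow_add_one hu.ne' p]
    field_simp
    ring
  have hnonneg : ∀ x ∈ Ioi (0:ℝ),
      0 ≤ (1 + γ * x / σ) ^ p * Real.log (1 + γ * x / σ) := by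
    intro x hx
    have hx0 : (0:ℝ) < x := hx
    have h1 : (1:ℝ) ≤ 1 + γ * x / σ := by
      have : 0 ≤ γ * x / σ := by positivity
      linarith
    exact mul_nonneg (Real.rpow_nonneg (by linarith) _) (Real.log_nonneg h1)
  have htend : Tendsto g atTop (𝓝 0) := by
    have hA := ((tendsto_rpow_mul_log_aux (show p + 1 < 0 by linarith)).comp
      (gpd_base_tendsto hγ hσ)).div_const (γ / σ * (p + 1))
    have hB := ((tendsto_rpow_neg_atTop (show (0:ℝ) < -(p+1) by linarith)).comp
      (gpd_base_tendsto hγ hσ)).div_const (γ / σ * (p + 1) ^ 2)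
    have := hA.sub hB
    simpa [hg, neg_neg, Function.comp, mul_div_assoc] using this
  refine ⟨integrableOn_Ioi_deriv_of_nonneg' hderiv hnonneg htend, ?_⟩
  rw [integral_Ioi_of_hasDerivAt_of_nonneg' hderiv hnonneg htend]
  simp only [hg]
  norm_num [Real.log_one]
  field_simp

/-- unbiasedness of the estimating function ψ at the true parameter. -/
theorem psi_unbiased (γ : ℝ) (hγ : γ ∈ Set.Ioo (0 : ℝ) 1) (σ : ℝ) (hσ : 0 < σ) :
    (∫ x in Set.Ioi (0 : ℝ), psiGamma γ σ x * gpdPdf γ σ x = 0) ∧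
    (∫ x in Set.Ioi (0 : ℝ), psiSigma γ σ x * gpdPdf γ σ x = 0) := by
  obtain ⟨hγ0, hγ1⟩ := hγ
  have hγne : γ ≠ 0 := hγ0.ne'
  have hσne : σ ≠ 0 := hσ.ne'
  have hγ1ne : γ - 1 ≠ 0 := by intro h; nlinarith
  have hγ2ne : γ - 2 ≠ 0 := by intro h; nlinarith
  have hinvγ : (0:ℝ) < 1/γ := by positivity
  have hpa : (-1/γ - 1 : ℝ) < -1 := by
    have : (0:ℝ) < 1/γ := hinvγ
    rw [neg_div]; linarith
  have hpb : (-2/γ - 1 : ℝ) < -1 := by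
    have : (0:ℝ) < 2/γ := by positivity
    rw [neg_div]; linarith
  have hpb1 : (-2/γ : ℝ) < -1 := by
    have h2 : (1:ℝ) < 2/γ := by
      rw [lt_div_iff₀ hγ0]; linarith
    rw [neg_div]; linarith
  have h2γ : (2:ℝ) - γ ≠ 0 := by intro h; nlinarith
  have va : -(σ / (γ * (-1/γ - 1 + 1))) = σ := by
    rw [show γ * (-1/γ - 1 + 1) = -1 by field_simp; ring]
    ring
  have vb : -(σ / (γ * (-2/γ - 1 + 1))) = σ / 2 := by
    rw [show γ * (-2/γ - 1 + 1) = -2 by field_simp; ring]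
    ring
  have vb1 : -(σ / (γ * (-2/γ + 1))) = σ / (2 - γ) := by
    rw [show γ * (-2/γ + 1) = γ - 2 by field_simp; ring]
    field_simp
    ring
  have vk : σ / (γ * (-2/γ + 1) ^ 2) = σ * γ / (γ - 2) ^ 2 := by
    rw [show γ * (-2/γ + 1) ^ 2 = (γ-2)^2 / γ by field_simp; ring]
    rw [div_div_eq_mul_div]
  have hJa := J_lemma hγ0 hσ (-1/γ - 1) hpa
  have hJb := J_lemma hγ0 hσ (-2/γ - 1) hpb
  have hJb1 := J_lemma hγ0 hσ (-2/γ) hpb1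
  have hK := K_lemma hγ0 hσ (-2/γ) hpb1
  -- pointwise facts
  have key : ∀ x ∈ Ioi (0:ℝ),
      ((σ / (σ + γ * x)) ^ (1 / γ : ℝ) = (1 + γ * x / σ) ^ (-(1/γ) : ℝ)) ∧
      (σ + γ * x = σ * (1 + γ * x / σ)) ∧
      ((1 + γ * x / σ) ^ (-2/γ - 1 : ℝ)
        = (1 + γ * x / σ) ^ (-(1/γ) : ℝ) * (1 + γ * x / σ) ^ (-1/γ - 1 : ℝ)) ∧
      ((1 + γ * x / σ) ^ (-2/γ : ℝ)
        = (1 + γ * x / σ) ^ (-(1/γ) : ℝ) * (1 + γ * x / σ) ^ (-1/γ - 1 : ℝ)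
            * (1 + γ * x / σ)) := by
    intro x hx
    have hx0 : (0:ℝ) < x := hx
    have hu : (0:ℝ) < 1 + γ * x / σ := by positivity
    have hσγx : σ + γ * x = σ * (1 + γ * x / σ) := by field_simp
    refine ⟨?_, hσγx, ?_, ?_⟩
    · rw [hσγx, Real.rpow_neg hu.le, ← Real.inv_rpow hu.le]
      congr 1
      field_simp
    · rw [← Real.rpow_add hu]; congr 1; ring
    · rw [← Real.rpow_add hu, ← Real.rpow_add_one hu.ne']; congr 1; ring
  constructor
  · -- γ-part
    have hpt : EqOn (fun x => psiGamma γ σ x * gpdPdf γ σ x)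
        (fun x => (1/(2*(γ-2)^2) - 1/((γ-1)^2)) * (1 + γ * x / σ) ^ (-1/γ - 1 : ℝ)
          + ((1/γ^2) * (1 + γ * x / σ) ^ (-2/γ - 1 : ℝ)
            + (((2*γ-1)/((γ-1)^2*γ^2)) * (1 + γ * x / σ) ^ (-2/γ : ℝ)
              + (-(1/((γ-1)*γ^2)))
                * ((1 + γ * x / σ) ^ (-2/γ : ℝ) * Real.log (1 + γ * x / σ))))) (Ioi 0) := by
      intro x hx
      obtain ⟨h1, h2, h3, h4⟩ := key x hx
      have hx0 : (0:ℝ) < x := hx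
      have hu : (0:ℝ) < 1 + γ * x / σ := by positivity
      simp only [psiGamma, gpdPdf]
      rw [h1, h3, h4, h2]
      field_simp
      ring
    rw [setIntegral_congr_fun measurableSet_Ioi hpt]
    have hI1 : IntegrableOn (fun x : ℝ =>
        (1/(2*(γ-2)^2) - 1/((γ-1)^2)) * (1 + γ * x / σ) ^ (-1/γ - 1 : ℝ)) (Ioi 0) :=
      hJa.1.const_mul _
    have hI2 : IntegrableOn (fun x : ℝ =>
        (1/γ^2) * (1 + γ * x / σ) ^ (-2/γ - 1 : ℝ)) (Ioi 0) := hJb.1.const_mul _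
    have hI3 : IntegrableOn (fun x : ℝ =>
        ((2*γ-1)/((γ-1)^2*γ^2)) * (1 + γ * x / σ) ^ (-2/γ : ℝ)) (Ioi 0) :=
      hJb1.1.const_mul _
    have hI4 : IntegrableOn (fun x : ℝ =>
        (-(1/((γ-1)*γ^2)))
          * ((1 + γ * x / σ) ^ (-2/γ : ℝ) * Real.log (1 + γ * x / σ))) (Ioi 0) :=
      hK.1.const_mul _
    have hI34 : IntegrableOn (fun x : ℝ =>
        ((2*γ-1)/((γ-1)^2*γ^2)) * (1 + γ * x / σ) ^ (-2/γ : ℝ)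
          + (-(1/((γ-1)*γ^2)))
            * ((1 + γ * x / σ) ^ (-2/γ : ℝ) * Real.log (1 + γ * x / σ))) (Ioi 0) :=
      hI3.add hI4
    have hI234 : IntegrableOn (fun x : ℝ =>
        (1/γ^2) * (1 + γ * x / σ) ^ (-2/γ - 1 : ℝ)
          + (((2*γ-1)/((γ-1)^2*γ^2)) * (1 + γ * x / σ) ^ (-2/γ : ℝ)
            + (-(1/((γ-1)*γ^2)))
              * ((1 + γ * x / σ) ^ (-2/γ : ℝ) * Real.log (1 + γ * x / σ)))) (Ioi 0) :=
      hI2.add hI34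
    rw [integral_add hI1 hI234, integral_add hI2 hI34, integral_add hI3 hI4,
      MeasureTheory.integral_const_mul, MeasureTheory.integral_const_mul,
      MeasureTheory.integral_const_mul, MeasureTheory.integral_const_mul,
      hJa.2, hJb.2, hJb1.2, hK.2, va, vb, vb1, vk]
    field_simp
    ring
  · -- σ-part
    have hpt : EqOn (fun x => psiSigma γ σ x * gpdPdf γ σ x)
        (fun x => (-(1/(2*(γ-2)))/σ + ((γ-1)*σ)⁻¹) * (1 + γ * x / σ) ^ (-1/γ - 1 : ℝ)
          + ((-(1/(γ*σ))) * (1 + γ * x / σ) ^ (-2/γ - 1 : ℝ)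
            + (-(1/((γ-1)*γ*σ))) * (1 + γ * x / σ) ^ (-2/γ : ℝ))) (Ioi 0) := by
      intro x hx
      obtain ⟨h1, h2, h3, h4⟩ := key x hx
      have hx0 : (0:ℝ) < x := hx
      have hu : (0:ℝ) < 1 + γ * x / σ := by positivity
      simp only [psiSigma, gpdPdf]
      rw [h1, h3, h4]
      field_simp
      ring
    rw [setIntegral_congr_fun measurableSet_Ioi hpt]
    have hI1 : IntegrableOn (fun x : ℝ =>
        (-(1/(2*(γ-2)))/σ + ((γ-1)*σ)⁻¹) * (1 + γ * x / σ) ^ (-1/γ - 1 : ℝ)) (Ioi 0) :=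
      hJa.1.const_mul _
    have hI2 : IntegrableOn (fun x : ℝ =>
        (-(1/(γ*σ))) * (1 + γ * x / σ) ^ (-2/γ - 1 : ℝ)) (Ioi 0) := hJb.1.const_mul _
    have hI3 : IntegrableOn (fun x : ℝ =>
        (-(1/((γ-1)*γ*σ))) * (1 + γ * x / σ) ^ (-2/γ : ℝ)) (Ioi 0) := hJb1.1.const_mul _
    have hI23 : IntegrableOn (fun x : ℝ =>
        (-(1/(γ*σ))) * (1 + γ * x / σ) ^ (-2/γ - 1 : ℝ)
          + (-(1/((γ-1)*γ*σ))) * (1 + γ * x / σ) ^ (-2/γ : ℝ)) (Ioi 0) := hI2.add hI3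
    rw [integral_add hI1 hI23, integral_add hI2 hI3,
      MeasureTheory.integral_const_mul, MeasureTheory.integral_const_mul,
      MeasureTheory.integral_const_mul, hJa.2, hJb.2, hJb1.2, va, vb, vb1]
    field_simp
    ring
end

section
/- For every γ ∈ (0,1) and σ > 0, the expectations under GPD(γ,σ) of the partial derivatives of the estimating function ψ satisfy: ∫₀^∞ (∂ψ_γ(x;γ,σ)/∂γ) f_{γ,σ}(x) dx = (γ−6)σ / ( 2(γ−2)³(γ+2) ), ∫₀^∞ (∂ψ_γ(x;γ,σ)/∂σ) f_{γ,σ}(x) dx = (6−γ) / ( 4(γ−2)²(γ+2) ), ∫₀^∞ (∂ψ_σ(x;γ,σ)/∂γ) f_{γ,σ}(x) dx = (6−γ) / ( 4(γ−2)²(γ+2) ), and ∫₀^∞ (∂ψ_σ(x;γ,σ)/∂σ) f_{γ,σ}(x) dx = 1 / ( σ(4 − γ²) ). -/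
open Real MeasureTheory

open Filter Set Topology

section basic
variable {γ σ x : ℝ}

lemma Ylim (hγ : 0 < γ) (hσ : 0 < σ) :
    Tendsto (fun x : ℝ => 1 + γ * x / σ) atTop atTop := by
  apply tendsto_atTop_add_const_left
  exact (tendsto_id.const_mul_atTop hγ).atTop_div_const hσ

lemma hdY (x : ℝ) : HasDerivAt (fun x : ℝ => 1 + γ * x / σ) (γ / σ) x := by
  simpa using (((hasDerivAt_id x).const_mul γ).div_const σ).const_add 1

lemma Ypos (hγ : 0 < γ) (hσ : 0 < σ) (hx : 0 ≤ x) : 0 < 1 + γ * x / σ := by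
  have : 0 ≤ γ * x / σ := by positivity
  linarith

lemma Yge1 (hγ : 0 < γ) (hσ : 0 < σ) (hx : 0 ≤ x) : 1 ≤ 1 + γ * x / σ := by
  have : 0 ≤ γ * x / σ := by positivity
  linarith

lemma tendsto_rpow_log_pow (q : ℝ) (hq : q < 0) (k : ℕ) :
    Tendsto (fun u : ℝ => u ^ q * Real.log u ^ k) atTop (𝓝 0) := by
  have h : Tendsto (fun u : ℝ => Real.log u ^ k * Real.exp (q * Real.log u)) atTop (𝓝 0) := by
    have h1 : Tendsto (fun v : ℝ => v ^ k * Real.exp (q * v)) atTop (𝓝 0) := by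
      have := tendsto_rpow_mul_exp_neg_mul_atTop_nhds_zero (k : ℝ) (-q) (by linarith)
      refine (this.congr' ?_)
      filter_upwards [eventually_gt_atTop 0] with v hv
      rw [← Real.rpow_natCast v k]
      ring_nf
    exact h1.comp Real.tendsto_log_atTop
  refine h.congr' ?_
  filter_upwards [eventually_gt_atTop 0] with u hu
  rw [Real.rpow_def_of_pos hu, mul_comm (Real.log u) q]
  ring

lemma Ipow (hγ0 : 0 < γ) (hσ : 0 < σ) (p : ℝ) (hp : p < -1) :
    IntegrableOn (fun x : ℝ => (1 + γ * x / σ) ^ p) (Ioi 0) ∧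
      ∫ x in Ioi (0:ℝ), (1 + γ * x / σ) ^ p = -(σ / (γ * (p + 1))) := by
  have hp1 : p + 1 ≠ 0 := by intro h; nlinarith
  have hderiv : ∀ x ∈ Ici (0:ℝ),
      HasDerivAt (fun x : ℝ => σ / (γ * (p+1)) * (1 + γ * x / σ) ^ (p+1))
        ((1 + γ * x / σ) ^ p) x := by
    intro x hx
    have hY := Ypos hγ0 hσ (mem_Ici.1 hx)
    have h := ((hdY x).rpow_const (p := p+1) (Or.inl hY.ne')).const_mul (σ / (γ * (p+1)))
    refine h.congr_deriv ?_
    rw [show p + 1 - 1 = p by ring]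
    field_simp
  have hnn : ∀ x ∈ Ioi (0:ℝ), 0 ≤ (1 + γ * x / σ) ^ p := fun x hx =>
    rpow_nonneg (Ypos hγ0 hσ (le_of_lt hx)).le p
  have h0 : Tendsto (fun u : ℝ => u ^ (p+1)) atTop (𝓝 0) := by
    simpa using tendsto_rpow_neg_atTop (show (0:ℝ) < -(p+1) by linarith)
  have hF : Tendsto (fun x : ℝ => σ / (γ * (p+1)) * (1 + γ * x / σ) ^ (p+1)) atTop
      (𝓝 (σ / (γ * (p+1)) * 0)) := ((h0.comp (Ylim hγ0 hσ)).const_mul _)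
  refine ⟨integrableOn_Ioi_deriv_of_nonneg' hderiv hnn hF, ?_⟩
  rw [integral_Ioi_of_hasDerivAt_of_nonneg' hderiv hnn hF]
  norm_num

lemma IpowL (hγ0 : 0 < γ) (hσ : 0 < σ) (p : ℝ) (hp : p < -1) :
    IntegrableOn (fun x : ℝ => (1 + γ * x / σ) ^ p * Real.log (1 + γ * x / σ)) (Ioi 0) ∧
      ∫ x in Ioi (0:ℝ), (1 + γ * x / σ) ^ p * Real.log (1 + γ * x / σ)
        = σ / (γ * (p + 1) ^ 2) := by
  have hσ' := hσ.ne'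
  have hγ' := hγ0.ne'
  have hp1 : p + 1 ≠ 0 := by intro h; nlinarith
  set F : ℝ → ℝ := fun x => σ / (γ * (p+1)) * (1 + γ * x / σ) ^ (p+1) * Real.log (1 + γ * x / σ)
      - σ / (γ * (p+1)^2) * (1 + γ * x / σ) ^ (p+1) with hF
  have hderiv : ∀ x ∈ Ici (0:ℝ),
      HasDerivAt F ((1 + γ * x / σ) ^ p * Real.log (1 + γ * x / σ)) x := by
    intro x hx
    have hY := Ypos hγ0 hσ (mem_Ici.1 hx)
    have h1 := ((hdY x).rpow_const (p := p+1) (Or.inl hY.ne')).const_mul (σ / (γ * (p+1)))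
    have h2 := (hdY x).log hY.ne'
    have h3 := ((hdY x).rpow_const (p := p+1) (Or.inl hY.ne')).const_mul (σ / (γ * (p+1)^2))
    have h := (h1.mul h2).sub h3
    refine h.congr_deriv ?_
    rw [show p + 1 - 1 = p by ring, Real.rpow_add_one hY.ne' p]
    set Y := 1 + γ * x / σ
    field_simp [hY.ne']
    ring
  have hnn : ∀ x ∈ Ioi (0:ℝ), 0 ≤ (1 + γ * x / σ) ^ p * Real.log (1 + γ * x / σ) := by
    intro x hx
    have h1 := Yge1 hγ0 hσ (le_of_lt hx)
    exact mul_nonneg (rpow_nonneg (by linarith) p) (Real.log_nonneg h1)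
  have h0 : Tendsto (fun u : ℝ => u ^ (p+1) * Real.log u ^ 1) atTop (𝓝 0) :=
    tendsto_rpow_log_pow (p+1) (by linarith) 1
  have hFt : Tendsto F atTop (𝓝 (σ / (γ * (p+1)) * 0 - σ / (γ * (p+1)^2) * 0)) := by
    apply Tendsto.sub
    · have := (h0.comp (Ylim hγ0 hσ)).const_mul (σ / (γ * (p+1)))
      simp only [mul_zero] at this ⊢
      refine this.congr (fun x => ?_)
      simp [Function.comp]; ring
    · have h0' : Tendsto (fun u : ℝ => u ^ (p+1)) atTop (𝓝 0) := by
        simpa using tendsto_rpow_neg_atTop (show (0:ℝ) < -(p+1) by linarith)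
      exact (h0'.comp (Ylim hγ0 hσ)).const_mul _
  refine ⟨integrableOn_Ioi_deriv_of_nonneg' hderiv hnn hFt, ?_⟩
  rw [integral_Ioi_of_hasDerivAt_of_nonneg' hderiv hnn hFt]
  simp [hF]

lemma IpowL2 (hγ0 : 0 < γ) (hσ : 0 < σ) (p : ℝ) (hp : p < -1) :
    IntegrableOn (fun x : ℝ => (1 + γ * x / σ) ^ p * Real.log (1 + γ * x / σ) ^ 2) (Ioi 0) ∧
      ∫ x in Ioi (0:ℝ), (1 + γ * x / σ) ^ p * Real.log (1 + γ * x / σ) ^ 2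
        = -(2 * σ / (γ * (p + 1) ^ 3)) := by
  have hσ' := hσ.ne'
  have hγ' := hγ0.ne'
  have hp1 : p + 1 ≠ 0 := by intro h; nlinarith
  set F : ℝ → ℝ := fun x =>
      σ / (γ * (p+1)) * (1 + γ * x / σ) ^ (p+1) * Real.log (1 + γ * x / σ) ^ 2
      - 2 * σ / (γ * (p+1)^2) * (1 + γ * x / σ) ^ (p+1) * Real.log (1 + γ * x / σ)
      + 2 * σ / (γ * (p+1)^3) * (1 + γ * x / σ) ^ (p+1) with hF
  have hderiv : ∀ x ∈ Ici (0:ℝ),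
      HasDerivAt F ((1 + γ * x / σ) ^ p * Real.log (1 + γ * x / σ) ^ 2) x := by
    intro x hx
    have hY := Ypos hγ0 hσ (mem_Ici.1 hx)
    have h1 := ((hdY x).rpow_const (p := p+1) (Or.inl hY.ne')).const_mul (σ / (γ * (p+1)))
    have h2 := (hdY x).log hY.ne'
    have h3 := ((hdY x).rpow_const (p := p+1) (Or.inl hY.ne')).const_mul (2 * σ / (γ * (p+1)^2))
    have h4 := ((hdY x).rpow_const (p := p+1) (Or.inl hY.ne')).const_mul (2 * σ / (γ * (p+1)^3))
    have h := ((h1.mul (h2.pow 2)).sub (h3.mul h2)).add h4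
    refine h.congr_deriv ?_
    rw [show p + 1 - 1 = p by ring, Real.rpow_add_one hY.ne' p, Pi.pow_apply]
    set Y := 1 + γ * x / σ
    field_simp [hY.ne']
    ring
  have hnn : ∀ x ∈ Ioi (0:ℝ), 0 ≤ (1 + γ * x / σ) ^ p * Real.log (1 + γ * x / σ) ^ 2 := by
    intro x hx
    exact mul_nonneg (rpow_nonneg (by linarith [Yge1 hγ0 hσ (le_of_lt (mem_Ioi.1 hx))]) p)
      (sq_nonneg _)
  have h0 : ∀ k : ℕ, Tendsto (fun u : ℝ => u ^ (p+1) * Real.log u ^ k) atTop (𝓝 0) :=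
    fun k => tendsto_rpow_log_pow (p+1) (by linarith) k
  have hFt : Tendsto F atTop (𝓝 (σ / (γ * (p+1)) * 0 - 2 * σ / (γ * (p+1)^2) * 0
      + 2 * σ / (γ * (p+1)^3) * 0)) := by
    apply Tendsto.add
    apply Tendsto.sub
    · have := ((h0 2).comp (Ylim hγ0 hσ)).const_mul (σ / (γ * (p+1)))
      simp only [mul_zero] at this ⊢
      refine this.congr (fun x => ?_)
      simp [Function.comp]; ring
    · have := ((h0 1).comp (Ylim hγ0 hσ)).const_mul (2 * σ / (γ * (p+1)^2))
      simp only [mul_zero] at this ⊢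
      refine this.congr (fun x => ?_)
      simp [Function.comp]; ring
    · have h0' : Tendsto (fun u : ℝ => u ^ (p+1)) atTop (𝓝 0) := by
        simpa using tendsto_rpow_neg_atTop (show (0:ℝ) < -(p+1) by linarith)
      exact (h0'.comp (Ylim hγ0 hσ)).const_mul _
  refine ⟨integrableOn_Ioi_deriv_of_nonneg' hderiv hnn hFt, ?_⟩
  rw [integral_Ioi_of_hasDerivAt_of_nonneg' hderiv hnn hFt]
  simp [hF]

end basic

section keys
variable {γ σ x : ℝ}

set_option maxHeartbeats 2000000 in
lemma key1 (hγ0 : 0 < γ) (hγ1 : γ < 1) (hσ : 0 < σ) (hx : 0 < x) :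
    deriv (fun g : ℝ => psiGamma g σ x) γ * gpdPdf γ σ x
      = ((-σ/(γ-2)^3 + γ^2*σ*(2*γ*(γ-1)*(2*γ-1))/((γ-1)^2*γ^2)^2 - 2*γ*σ/((γ-1)^2*γ^2))/σ)
          * (1 + γ * x / σ) ^ (-1/γ-1 : ℝ)
        + ((((2*γ-1)*(-2*(2*γ-1)/(γ*(γ-1)) - 1/γ^2) + 3*γ*(1/γ))/((γ-1)^2*γ^2))
            * (1 + γ * x / σ) ^ (-2/γ : ℝ)
        + ((((γ-1)^2*(-2*(2*γ-1)/(γ*(γ-1))) + (2*γ-1-(γ-1)^2)*(1/γ^2) + (2*γ^2-3*γ)*(1/γ))/((γ-1)^2*γ^2))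
            * (1 + γ * x / σ) ^ (-2/γ-1 : ℝ)
        + ((((γ-1)^2/γ^2)/((γ-1)^2*γ^2)) * (1 + γ * x / σ) ^ (-2/γ-2 : ℝ)
        + (((-(-2*(2*γ-1)/(γ*(γ-1)))*(γ-1) + (3*γ-2)/γ^2 - (2*γ-1)/γ)/((γ-1)^2*γ^2))
            * ((1 + γ * x / σ) ^ (-2/γ : ℝ) * Real.log (1 + γ * x / σ))
        + (((((γ-1)^2-(γ-1))/γ^2 + (γ-1)/γ)/((γ-1)^2*γ^2))
            * ((1 + γ * x / σ) ^ (-2/γ-1 : ℝ) * Real.log (1 + γ * x / σ))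
        + ((-(γ-1)/γ^2)/((γ-1)^2*γ^2))
            * ((1 + γ * x / σ) ^ (-2/γ : ℝ) * Real.log (1 + γ * x / σ) ^ 2)))))) := by
  have hσ' := hσ.ne'
  have hγ' := hγ0.ne'
  have hsx : 0 < σ + γ * x := by positivity
  have hY : 0 < 1 + γ * x / σ := Ypos hγ0 hσ hx.le
  have hbpos : 0 < σ / (σ + γ * x) := by positivity
  have hg1 : γ - 1 ≠ 0 := by intro h; nlinarith
  have hg2 : γ - 2 ≠ 0 := by intro h; nlinarith
  have hne : (2:ℝ) * (γ-2)^2 ≠ 0 := mul_ne_zero two_ne_zero (pow_ne_zero 2 hg2)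
  have hKne : ((γ-1)^2*γ^2 : ℝ) ≠ 0 := mul_ne_zero (pow_ne_zero 2 hg1) (pow_ne_zero 2 hγ')
  have n1 := (hasDerivAt_const γ σ).div ((((hasDerivAt_id γ).sub_const 2).pow 2).const_mul 2) hne
  have n2 := ((((hasDerivAt_id γ).sub_const 1).pow 2).mul ((hasDerivAt_id γ).pow 2)).inv hKne
  have n3 := (((hasDerivAt_id γ).pow 2).mul_const σ).neg
  have n4 := (hasDerivAt_const γ σ).div (((hasDerivAt_id γ).mul_const x).const_add σ) hsx.ne'
  have nexp := (hasDerivAt_const γ (1:ℝ)).div (hasDerivAt_id γ) hγ'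
  have nA := n4.rpow nexp hbpos
  have n5 := (hasDerivAt_id γ).mul (((hasDerivAt_id γ).mul_const σ).add
    ((((hasDerivAt_id γ).const_mul 2).sub_const 1).mul_const x))
  have n6 := ((hasDerivAt_id γ).sub_const 1).mul (((hasDerivAt_id γ).mul_const x).const_add σ)
  have nlog := ((((hasDerivAt_id γ).mul_const x).div_const σ).const_add 1).log hY.ne'
  have n7 := n6.mul nlog
  have n8 := nA.mul (n5.sub n7)
  have n9 := n2.mul (n3.add n8)
  have hd := n1.add n9
  have hde : deriv (fun g : ℝ => psiGamma g σ x) γ = _ := HasDerivAt.deriv (by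
    simp only [psiGamma]
    exact hd)
  rw [hde, gpdPdf]
  simp only [id_eq, Pi.div_apply, Pi.pow_apply, Pi.mul_apply, Pi.add_apply, Pi.sub_apply, Pi.neg_apply, Pi.inv_apply]
  have hb : σ / (σ + γ * x) = (1 + γ * x / σ)⁻¹ := by field_simp
  rw [hb]
  have hA : ((1 + γ * x / σ)⁻¹) ^ (1/γ : ℝ)
      = (1 + γ * x / σ) ^ (-1/γ-1 : ℝ) * (1 + γ * x / σ) := by
    rw [Real.inv_rpow hY.le, ← Real.rpow_neg hY.le, show -(1/γ) = (-1/γ-1)+1 by ring,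
      Real.rpow_add_one hY.ne']
  have hA' : ((1 + γ * x / σ)⁻¹) ^ (1/γ-1 : ℝ)
      = (1 + γ * x / σ) ^ (-1/γ-1 : ℝ) * (1 + γ * x / σ) * (1 + γ * x / σ) := by
    rw [Real.inv_rpow hY.le, ← Real.rpow_neg hY.le, show -(1/γ-1) = ((-1/γ-1)+1)+1 by ring,
      Real.rpow_add_one hY.ne', Real.rpow_add_one hY.ne']
  have hw2 : (1 + γ * x / σ) ^ (-2/γ : ℝ)
      = (1 + γ * x / σ) ^ (-1/γ-1 : ℝ) * (1 + γ * x / σ) ^ (-1/γ-1 : ℝ)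
        * (1 + γ * x / σ) * (1 + γ * x / σ) := by
    rw [show (-2/γ : ℝ) = (((-1/γ-1)+(-1/γ-1))+1)+1 by ring, Real.rpow_add_one hY.ne',
      Real.rpow_add_one hY.ne', Real.rpow_add hY]
  have hw1 : (1 + γ * x / σ) ^ (-2/γ-1 : ℝ)
      = (1 + γ * x / σ) ^ (-1/γ-1 : ℝ) * (1 + γ * x / σ) ^ (-1/γ-1 : ℝ) * (1 + γ * x / σ) := by
    rw [show (-2/γ-1 : ℝ) = ((-1/γ-1)+(-1/γ-1))+1 by ring, Real.rpow_add_one hY.ne',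
      Real.rpow_add hY]
  have hw0 : (1 + γ * x / σ) ^ (-2/γ-2 : ℝ)
      = (1 + γ * x / σ) ^ (-1/γ-1 : ℝ) * (1 + γ * x / σ) ^ (-1/γ-1 : ℝ) := by
    rw [show (-2/γ-2 : ℝ) = (-1/γ-1)+(-1/γ-1) by ring, Real.rpow_add hY]
  rw [hA, hA', Real.log_inv, hw2, hw1, hw0]
  field_simp
  ring

lemma key2 (hγ0 : 0 < γ) (hγ1 : γ < 1) (hσ : 0 < σ) (hx : 0 < x) :
    deriv (fun s : ℝ => psiGamma γ s x) σ * gpdPdf γ σ x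
      = ((1/(2*(γ-2)^2) - 1/(γ-1)^2)/σ) * (1 + γ * x / σ) ^ (-1/γ-1 : ℝ)
        + ((((2*γ-1)/γ + (γ-1))/(σ*(γ-1)^2*γ^2)) * (1 + γ * x / σ) ^ (-2/γ : ℝ)
        + ((((γ^2-4*γ+2)/γ + (γ^2-γ+1))/(σ*(γ-1)^2*γ^2)) * (1 + γ * x / σ) ^ (-2/γ-1 : ℝ)
        + (((-(γ-1)^2/γ)/(σ*(γ-1)^2*γ^2)) * (1 + γ * x / σ) ^ (-2/γ-2 : ℝ)
        + (((-(γ-1)/γ)/(σ*(γ-1)^2*γ^2)) * ((1 + γ * x / σ) ^ (-2/γ : ℝ) * Real.log (1 + γ * x / σ))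
        + ((-(γ-1)^2/γ)/(σ*(γ-1)^2*γ^2)) * ((1 + γ * x / σ) ^ (-2/γ-1 : ℝ) * Real.log (1 + γ * x / σ)))))) := by
  have hσ' := hσ.ne'
  have hγ' := hγ0.ne'
  have hsx : 0 < σ + γ * x := by positivity
  have hY : 0 < 1 + γ * x / σ := Ypos hγ0 hσ hx.le
  have hg1 : γ - 1 ≠ 0 := by intro h; nlinarith
  have hg2 : γ - 2 ≠ 0 := by intro h; nlinarith
  have hγ1' : (1:ℝ) ≤ 1/γ := by rw [le_div_iff₀ hγ0]; linarith
  have m1 := (hasDerivAt_id σ).div_const (2*(γ-2)^2)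
  have m2 := ((hasDerivAt_id σ).const_mul (γ^2)).neg
  have m3 := (hasDerivAt_id σ).div ((hasDerivAt_id σ).add_const (γ*x)) hsx.ne'
  have m4 := m3.rpow_const (p := (1/γ : ℝ)) (Or.inr hγ1')
  have m5 := (((hasDerivAt_id σ).const_mul γ).add_const ((2*γ-1)*x)).const_mul γ
  have m6 := ((hasDerivAt_id σ).add_const (γ*x)).const_mul (γ-1)
  have mlog := (((hasDerivAt_const σ (γ*x)).div (hasDerivAt_id σ) hσ.ne').const_add 1).log hY.ne'
  have m7 := m6.mul mlog
  have m8 := m4.mul (m5.sub m7)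
  have m9 := (m2.add m8).const_mul (((γ-1)^2*γ^2)⁻¹)
  have hd := m1.add m9
  have hde : deriv (fun s : ℝ => psiGamma γ s x) σ = _ := HasDerivAt.deriv (by
    simp only [psiGamma]
    exact hd)
  rw [hde, gpdPdf]
  simp only [id_eq, Pi.div_apply, Pi.pow_apply, Pi.mul_apply, Pi.add_apply, Pi.sub_apply, Pi.neg_apply, Pi.inv_apply]
  have hb : σ / (σ + γ * x) = (1 + γ * x / σ)⁻¹ := by field_simp
  rw [hb]
  have hA : ((1 + γ * x / σ)⁻¹) ^ (1/γ : ℝ)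
      = (1 + γ * x / σ) ^ (-1/γ-1 : ℝ) * (1 + γ * x / σ) := by
    rw [Real.inv_rpow hY.le, ← Real.rpow_neg hY.le, show -(1/γ) = (-1/γ-1)+1 by ring,
      Real.rpow_add_one hY.ne']
  have hA' : ((1 + γ * x / σ)⁻¹) ^ (1/γ-1 : ℝ)
      = (1 + γ * x / σ) ^ (-1/γ-1 : ℝ) * (1 + γ * x / σ) * (1 + γ * x / σ) := by
    rw [Real.inv_rpow hY.le, ← Real.rpow_neg hY.le, show -(1/γ-1) = ((-1/γ-1)+1)+1 by ring,
      Real.rpow_add_one hY.ne', Real.rpow_add_one hY.ne']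
  have hw2 : (1 + γ * x / σ) ^ (-2/γ : ℝ)
      = (1 + γ * x / σ) ^ (-1/γ-1 : ℝ) * (1 + γ * x / σ) ^ (-1/γ-1 : ℝ)
        * (1 + γ * x / σ) * (1 + γ * x / σ) := by
    rw [show (-2/γ : ℝ) = (((-1/γ-1)+(-1/γ-1))+1)+1 by ring, Real.rpow_add_one hY.ne',
      Real.rpow_add_one hY.ne', Real.rpow_add hY]
  have hw1 : (1 + γ * x / σ) ^ (-2/γ-1 : ℝ)
      = (1 + γ * x / σ) ^ (-1/γ-1 : ℝ) * (1 + γ * x / σ) ^ (-1/γ-1 : ℝ) * (1 + γ * x / σ) := by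
    rw [show (-2/γ-1 : ℝ) = ((-1/γ-1)+(-1/γ-1))+1 by ring, Real.rpow_add_one hY.ne',
      Real.rpow_add hY]
  have hw0 : (1 + γ * x / σ) ^ (-2/γ-2 : ℝ)
      = (1 + γ * x / σ) ^ (-1/γ-1 : ℝ) * (1 + γ * x / σ) ^ (-1/γ-1 : ℝ) := by
    rw [show (-2/γ-2 : ℝ) = (-1/γ-1)+(-1/γ-1) by ring, Real.rpow_add hY]
  rw [hA, hA', hw2, hw1, hw0]
  field_simp
  ring

lemma key3 (hγ0 : 0 < γ) (hγ1 : γ < 1) (hσ : 0 < σ) (hx : 0 < x) :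
    deriv (fun g : ℝ => psiSigma g σ x) γ * gpdPdf γ σ x
      = ((1/(2*(γ-2)^2) - 1/(γ-1)^2)/σ) * (1 + γ * x / σ) ^ (-1/γ-1 : ℝ)
        + ((1/(σ*(γ-1)^2*γ) + 1/(σ*(γ-1)*γ^3)) * (1 + γ * x / σ) ^ (-2/γ : ℝ)
        + (((γ-1)/(σ*(γ-1)^2*γ) + (γ-2)/(σ*(γ-1)*γ^3)) * (1 + γ * x / σ) ^ (-2/γ-1 : ℝ)
        + ((-((γ-1)/(σ*(γ-1)*γ^3))) * (1 + γ * x / σ) ^ (-2/γ-2 : ℝ)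
        + ((-(1/(σ*(γ-1)*γ^3))) * ((1 + γ * x / σ) ^ (-2/γ : ℝ) * Real.log (1 + γ * x / σ))
        + (-((γ-1)/(σ*(γ-1)*γ^3))) * ((1 + γ * x / σ) ^ (-2/γ-1 : ℝ) * Real.log (1 + γ * x / σ)))))) := by
  have hσ' := hσ.ne'
  have hγ' := hγ0.ne'
  have hsx : 0 < σ + γ * x := by positivity
  have hY : 0 < 1 + γ * x / σ := Ypos hγ0 hσ hx.le
  have hbpos : 0 < σ / (σ + γ * x) := by positivity
  have hg1 : γ - 1 ≠ 0 := by intro h; nlinarith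
  have hg2 : γ - 2 ≠ 0 := by intro h; nlinarith
  have hne : (2:ℝ) * (γ - 2) ≠ 0 := mul_ne_zero two_ne_zero hg2
  have hne2 : (γ - 1) * σ ≠ 0 := mul_ne_zero hg1 hσ'
  have c1 := ((hasDerivAt_const γ (1:ℝ)).div (((hasDerivAt_id γ).sub_const 2).const_mul 2) hne).neg
  have cbase := (hasDerivAt_const γ σ).div (((hasDerivAt_id γ).mul_const x).const_add σ) hsx.ne'
  have cexp := (hasDerivAt_const γ (1:ℝ)).div (hasDerivAt_id γ) hγ'
  have cA := cbase.rpow cexp hbpos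
  have cB := cA.const_mul (σ + x)
  have cC := cB.sub_const σ
  have cD := (((hasDerivAt_id γ).sub_const 1).mul_const σ).inv hne2
  have cE := cD.mul cC
  have hd := c1.sub cE
  have hde : deriv (fun g : ℝ => psiSigma g σ x) γ = _ := HasDerivAt.deriv (by
    simp only [psiSigma]
    exact hd)
  rw [hde, gpdPdf]
  simp only [id_eq, Pi.div_apply, Pi.pow_apply, Pi.mul_apply, Pi.add_apply, Pi.sub_apply, Pi.neg_apply, Pi.inv_apply]
  have hb : σ / (σ + γ * x) = (1 + γ * x / σ)⁻¹ := by field_simp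
  rw [hb]
  have hA : ((1 + γ * x / σ)⁻¹) ^ (1/γ : ℝ)
      = (1 + γ * x / σ) ^ (-1/γ-1 : ℝ) * (1 + γ * x / σ) := by
    rw [Real.inv_rpow hY.le, ← Real.rpow_neg hY.le, show -(1/γ) = (-1/γ-1)+1 by ring,
      Real.rpow_add_one hY.ne']
  have hA' : ((1 + γ * x / σ)⁻¹) ^ (1/γ-1 : ℝ)
      = (1 + γ * x / σ) ^ (-1/γ-1 : ℝ) * (1 + γ * x / σ) * (1 + γ * x / σ) := by
    rw [Real.inv_rpow hY.le, ← Real.rpow_neg hY.le, show -(1/γ-1) = ((-1/γ-1)+1)+1 by ring,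
      Real.rpow_add_one hY.ne', Real.rpow_add_one hY.ne']
  have hw2 : (1 + γ * x / σ) ^ (-2/γ : ℝ)
      = (1 + γ * x / σ) ^ (-1/γ-1 : ℝ) * (1 + γ * x / σ) ^ (-1/γ-1 : ℝ)
        * (1 + γ * x / σ) * (1 + γ * x / σ) := by
    rw [show (-2/γ : ℝ) = (((-1/γ-1)+(-1/γ-1))+1)+1 by ring, Real.rpow_add_one hY.ne',
      Real.rpow_add_one hY.ne', Real.rpow_add hY]
  have hw1 : (1 + γ * x / σ) ^ (-2/γ-1 : ℝ)
      = (1 + γ * x / σ) ^ (-1/γ-1 : ℝ) * (1 + γ * x / σ) ^ (-1/γ-1 : ℝ) * (1 + γ * x / σ) := by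
    rw [show (-2/γ-1 : ℝ) = ((-1/γ-1)+(-1/γ-1))+1 by ring, Real.rpow_add_one hY.ne',
      Real.rpow_add hY]
  have hw0 : (1 + γ * x / σ) ^ (-2/γ-2 : ℝ)
      = (1 + γ * x / σ) ^ (-1/γ-1 : ℝ) * (1 + γ * x / σ) ^ (-1/γ-1 : ℝ) := by
    rw [show (-2/γ-2 : ℝ) = (-1/γ-1)+(-1/γ-1) by ring, Real.rpow_add hY]
  rw [hA, hA', Real.log_inv, hw2, hw1, hw0]
  field_simp
  ring

lemma key4 (hγ0 : 0 < γ) (hγ1 : γ < 1) (hσ : 0 < σ) (hx : 0 < x) :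
    deriv (fun s : ℝ => psiSigma γ s x) σ * gpdPdf γ σ x
      = (1/(σ^2*γ^2)) * (1 + γ * x / σ) ^ (-2/γ : ℝ)
        + ((-2/(σ^2*γ^2)) * (1 + γ * x / σ) ^ (-2/γ-1 : ℝ)
        + (1/(σ^2*γ^2)) * (1 + γ * x / σ) ^ (-2/γ-2 : ℝ)) := by
  have hσ' := hσ.ne'
  have hγ' := hγ0.ne'
  have hsx : 0 < σ + γ * x := by positivity
  have hY : 0 < 1 + γ * x / σ := Ypos hγ0 hσ hx.le
  have hγ1' : (1:ℝ) ≤ 1/γ := by rw [le_div_iff₀ hγ0]; linarith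
  have hne2 : (γ - 1) * σ ≠ 0 := by
    apply mul_ne_zero _ hσ'
    intro h; nlinarith
  have h1 : HasDerivAt (fun s : ℝ => s / (s + γ * x))
      ((1 * (σ + γ*x) - σ * 1) / (σ + γ*x)^2) σ :=
    (hasDerivAt_id σ).div ((hasDerivAt_id σ).add_const (γ*x)) hsx.ne'
  have h2 := h1.rpow_const (p := (1/γ : ℝ)) (Or.inr hγ1')
  have h3 := ((hasDerivAt_id σ).add_const x).mul h2
  have h4 := h3.sub (hasDerivAt_id σ)
  have h5 : HasDerivAt (fun s : ℝ => ((γ-1)*s)⁻¹)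
      (-(γ-1) / ((γ-1)*σ)^2) σ := by
    have := (((hasDerivAt_id σ).const_mul (γ-1))).inv hne2
    exact this.congr_deriv (by simp)
  have h6 := h5.mul h4
  have hd := h6.const_sub (-(1 / (2 * (γ - 2))))
  have hde : deriv (fun s : ℝ => psiSigma γ s x) σ = _ := HasDerivAt.deriv (by
    simp only [psiSigma]
    exact hd)
  rw [hde, gpdPdf]
  simp only [id_eq, Pi.div_apply, Pi.pow_apply, Pi.mul_apply, Pi.add_apply, Pi.sub_apply, Pi.neg_apply, Pi.inv_apply]
  -- normalize rpow atoms
  have hb : σ / (σ + γ * x) = (1 + γ*x/σ)⁻¹ := by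
    field_simp
  rw [hb]
  have hA : ((1 + γ*x/σ)⁻¹) ^ (1/γ : ℝ) = (1 + γ*x/σ) ^ (-1/γ-1 : ℝ) * (1 + γ*x/σ) := by
    rw [Real.inv_rpow hY.le, ← Real.rpow_neg hY.le, show -(1/γ) = (-1/γ-1)+1 by ring, Real.rpow_add_one hY.ne']
  have hA' : ((1 + γ*x/σ)⁻¹) ^ (1/γ-1 : ℝ)
      = (1 + γ*x/σ) ^ (-1/γ-1 : ℝ) * (1 + γ*x/σ) * (1 + γ*x/σ) := by
    rw [Real.inv_rpow hY.le, ← Real.rpow_neg hY.le, show -(1/γ-1) = ((-1/γ-1)+1)+1 by ring,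
      Real.rpow_add_one hY.ne', Real.rpow_add_one hY.ne']
  have hw2 : (1 + γ*x/σ) ^ (-2/γ : ℝ)
      = (1 + γ*x/σ) ^ (-1/γ-1 : ℝ) * (1 + γ*x/σ) ^ (-1/γ-1 : ℝ) * (1 + γ*x/σ) * (1 + γ*x/σ) := by
    rw [show (-2/γ : ℝ) = (((-1/γ-1)+(-1/γ-1))+1)+1 by ring, Real.rpow_add_one hY.ne',
      Real.rpow_add_one hY.ne', Real.rpow_add hY]
  have hw1 : (1 + γ*x/σ) ^ (-2/γ-1 : ℝ)
      = (1 + γ*x/σ) ^ (-1/γ-1 : ℝ) * (1 + γ*x/σ) ^ (-1/γ-1 : ℝ) * (1 + γ*x/σ) := by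
    rw [show (-2/γ-1 : ℝ) = ((-1/γ-1)+(-1/γ-1))+1 by ring, Real.rpow_add_one hY.ne',
      Real.rpow_add hY]
  have hw0 : (1 + γ*x/σ) ^ (-2/γ-2 : ℝ)
      = (1 + γ*x/σ) ^ (-1/γ-1 : ℝ) * (1 + γ*x/σ) ^ (-1/γ-1 : ℝ) := by
    rw [show (-2/γ-2 : ℝ) = (-1/γ-1)+(-1/γ-1) by ring, Real.rpow_add hY]
  rw [hA, hA', hw2, hw1, hw0]
  have hg1 : γ - 1 ≠ 0 := by intro h; nlinarith
  field_simp
  ring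

end keys

set_option maxHeartbeats 1000000 in
/-- expectations under GPD(γ,σ) of the partial derivatives of the estimating
function ψ. -/
theorem psi_deriv_expectations (γ : ℝ) (hγ : γ ∈ Set.Ioo (0 : ℝ) 1) (σ : ℝ) (hσ : 0 < σ) :
    (∫ x in Set.Ioi (0 : ℝ), deriv (fun g : ℝ => psiGamma g σ x) γ * gpdPdf γ σ x
      = (γ - 6) * σ / (2 * (γ - 2) ^ 3 * (γ + 2))) ∧
    (∫ x in Set.Ioi (0 : ℝ), deriv (fun s : ℝ => psiGamma γ s x) σ * gpdPdf γ σ x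
      = (6 - γ) / (4 * (γ - 2) ^ 2 * (γ + 2))) ∧
    (∫ x in Set.Ioi (0 : ℝ), deriv (fun g : ℝ => psiSigma g σ x) γ * gpdPdf γ σ x
      = (6 - γ) / (4 * (γ - 2) ^ 2 * (γ + 2))) ∧
    (∫ x in Set.Ioi (0 : ℝ), deriv (fun s : ℝ => psiSigma γ s x) σ * gpdPdf γ σ x
      = 1 / (σ * (4 - γ ^ 2))) := by
  obtain ⟨hγ0, hγ1⟩ := hγ
  have hσ' := hσ.ne'
  have hγ' := hγ0.ne'
  have hg1 : γ - 1 ≠ 0 := by intro h; nlinarith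
  have hg2 : γ - 2 ≠ 0 := by intro h; nlinarith
  have h2m : (2:ℝ) - γ ≠ 0 := by intro h; nlinarith
  have h2p : (2:ℝ) + γ ≠ 0 := by intro h; nlinarith
  have hgp2 : γ + 2 ≠ 0 := by intro h; nlinarith
  have hig : (0:ℝ) < 1/γ := by positivity
  have h2γ : (0:ℝ) < 2/γ := by positivity
  have h2γ1 : (1:ℝ) < 2/γ := by rw [lt_div_iff₀ hγ0]; linarith
  have hpv : (-1/γ-1 : ℝ) < -1 := by
    rw [show (-1/γ-1:ℝ) = -(1/γ)-1 by ring]; linarith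
  have hp2 : (-2/γ : ℝ) < -1 := by
    rw [show (-2/γ:ℝ) = -(2/γ) by ring]; linarith
  have hp1 : (-2/γ-1 : ℝ) < -1 := by
    rw [show (-2/γ-1:ℝ) = -(2/γ)-1 by ring]; linarith
  have hp0 : (-2/γ-2 : ℝ) < -1 := by
    rw [show (-2/γ-2:ℝ) = -(2/γ)-2 by ring]; linarith
  have Iv := (Ipow hγ0 hσ (-1/γ-1) hpv).1
  have I2 := (Ipow hγ0 hσ (-2/γ) hp2).1
  have I1 := (Ipow hγ0 hσ (-2/γ-1) hp1).1
  have I0 := (Ipow hγ0 hσ (-2/γ-2) hp0).1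
  have I2L := (IpowL hγ0 hσ (-2/γ) hp2).1
  have I1L := (IpowL hγ0 hσ (-2/γ-1) hp1).1
  have I2L2 := (IpowL2 hγ0 hσ (-2/γ) hp2).1
  have Jv : ∫ x in Set.Ioi (0:ℝ), (1 + γ * x / σ) ^ (-1/γ-1 : ℝ) = σ := by
    rw [(Ipow hγ0 hσ (-1/γ-1) hpv).2]
    rw [show γ * (-1/γ-1+1) = -1 by field_simp; ring]
    rw [div_neg, div_one, neg_neg]
  have J2 : ∫ x in Set.Ioi (0:ℝ), (1 + γ * x / σ) ^ (-2/γ : ℝ) = σ/(2-γ) := by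
    rw [(Ipow hγ0 hσ (-2/γ) hp2).2]
    rw [show γ * (-2/γ+1) = -(2-γ) by field_simp; ring]
    rw [div_neg]; ring
  have J1 : ∫ x in Set.Ioi (0:ℝ), (1 + γ * x / σ) ^ (-2/γ-1 : ℝ) = σ/2 := by
    rw [(Ipow hγ0 hσ (-2/γ-1) hp1).2]
    rw [show γ * (-2/γ-1+1) = -2 by field_simp; ring]
    rw [div_neg]; ring
  have J0 : ∫ x in Set.Ioi (0:ℝ), (1 + γ * x / σ) ^ (-2/γ-2 : ℝ) = σ/(2+γ) := by
    rw [(Ipow hγ0 hσ (-2/γ-2) hp0).2]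
    rw [show γ * (-2/γ-2+1) = -(2+γ) by field_simp; ring]
    rw [div_neg]; ring
  have J2L : ∫ x in Set.Ioi (0:ℝ),
      (1 + γ * x / σ) ^ (-2/γ : ℝ) * Real.log (1 + γ * x / σ) = σ*γ/(γ-2)^2 := by
    rw [(IpowL hγ0 hσ (-2/γ) hp2).2]
    rw [show γ * (-2/γ+1)^2 = (γ-2)^2/γ by field_simp; ring]
    field_simp
  have J1L : ∫ x in Set.Ioi (0:ℝ),
      (1 + γ * x / σ) ^ (-2/γ-1 : ℝ) * Real.log (1 + γ * x / σ) = σ*γ/4 := by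
    rw [(IpowL hγ0 hσ (-2/γ-1) hp1).2]
    rw [show γ * (-2/γ-1+1)^2 = 4/γ by field_simp; ring]
    field_simp
  have J2L2 : ∫ x in Set.Ioi (0:ℝ),
      (1 + γ * x / σ) ^ (-2/γ : ℝ) * Real.log (1 + γ * x / σ) ^ 2 = 2*σ*γ^2/(2-γ)^3 := by
    rw [(IpowL2 hγ0 hσ (-2/γ) hp2).2]
    rw [show γ * (-2/γ+1)^3 = (γ-2)^3/γ^2 by field_simp; ring]
    rw [show (2*σ*γ^2/(2-γ)^3 : ℝ) = -(2*σ/((γ-2)^3/γ^2)) by field_simp; ring]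
  refine ⟨?_, ?_, ?_, ?_⟩
  · -- part 1
    rw [setIntegral_congr_fun measurableSet_Ioi (fun x hx => key1 hγ0 hγ1 hσ hx)]
    have i1 := Iv.const_mul (((-σ/(γ-2)^3 + γ^2*σ*(2*γ*(γ-1)*(2*γ-1))/((γ-1)^2*γ^2)^2 - 2*γ*σ/((γ-1)^2*γ^2))/σ))
    have i2 := I2.const_mul ((((2*γ-1)*(-2*(2*γ-1)/(γ*(γ-1)) - 1/γ^2) + 3*γ*(1/γ))/((γ-1)^2*γ^2)))
    have i3 := I1.const_mul ((((γ-1)^2*(-2*(2*γ-1)/(γ*(γ-1))) + (2*γ-1-(γ-1)^2)*(1/γ^2) + (2*γ^2-3*γ)*(1/γ))/((γ-1)^2*γ^2)))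
    have i4 := I0.const_mul ((((γ-1)^2/γ^2)/((γ-1)^2*γ^2)))
    have i5 := I2L.const_mul (((-(-2*(2*γ-1)/(γ*(γ-1)))*(γ-1) + (3*γ-2)/γ^2 - (2*γ-1)/γ)/((γ-1)^2*γ^2)))
    have i6 := I1L.const_mul ((((((γ-1)^2-(γ-1))/γ^2 + (γ-1)/γ)/((γ-1)^2*γ^2))))
    have i7 := I2L2.const_mul (((-(γ-1)/γ^2)/((γ-1)^2*γ^2)))
    have s6 : Integrable (fun x => (((((γ-1)^2-(γ-1))/γ^2 + (γ-1)/γ)/((γ-1)^2*γ^2))) * ((1 + γ * x / σ) ^ (-2/γ-1 : ℝ) * Real.log (1 + γ * x / σ)) + (((-(γ-1)/γ^2)/((γ-1)^2*γ^2)) * ((1 + γ * x / σ) ^ (-2/γ : ℝ) * Real.log (1 + γ * x / σ) ^ 2))) (volume.restrict (Set.Ioi 0)) := i6.add i7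
    have s5 : Integrable (fun x => ((-(-2*(2*γ-1)/(γ*(γ-1)))*(γ-1) + (3*γ-2)/γ^2 - (2*γ-1)/γ)/((γ-1)^2*γ^2)) * ((1 + γ * x / σ) ^ (-2/γ : ℝ) * Real.log (1 + γ * x / σ)) + ((((((γ-1)^2-(γ-1))/γ^2 + (γ-1)/γ)/((γ-1)^2*γ^2))) * ((1 + γ * x / σ) ^ (-2/γ-1 : ℝ) * Real.log (1 + γ * x / σ)) + (((-(γ-1)/γ^2)/((γ-1)^2*γ^2)) * ((1 + γ * x / σ) ^ (-2/γ : ℝ) * Real.log (1 + γ * x / σ) ^ 2)))) (volume.restrict (Set.Ioi 0)) := i5.add s6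
    have s4 : Integrable (fun x => (((γ-1)^2/γ^2)/((γ-1)^2*γ^2)) * (1 + γ * x / σ) ^ (-2/γ-2 : ℝ) + (((-(-2*(2*γ-1)/(γ*(γ-1)))*(γ-1) + (3*γ-2)/γ^2 - (2*γ-1)/γ)/((γ-1)^2*γ^2)) * ((1 + γ * x / σ) ^ (-2/γ : ℝ) * Real.log (1 + γ * x / σ)) + ((((((γ-1)^2-(γ-1))/γ^2 + (γ-1)/γ)/((γ-1)^2*γ^2))) * ((1 + γ * x / σ) ^ (-2/γ-1 : ℝ) * Real.log (1 + γ * x / σ)) + (((-(γ-1)/γ^2)/((γ-1)^2*γ^2)) * ((1 + γ * x / σ) ^ (-2/γ : ℝ) * Real.log (1 + γ * x / σ) ^ 2))))) (volume.restrict (Set.Ioi 0)) := i4.add s5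
    have s3 : Integrable (fun x => (((γ-1)^2*(-2*(2*γ-1)/(γ*(γ-1))) + (2*γ-1-(γ-1)^2)*(1/γ^2) + (2*γ^2-3*γ)*(1/γ))/((γ-1)^2*γ^2)) * (1 + γ * x / σ) ^ (-2/γ-1 : ℝ) + ((((γ-1)^2/γ^2)/((γ-1)^2*γ^2)) * (1 + γ * x / σ) ^ (-2/γ-2 : ℝ) + (((-(-2*(2*γ-1)/(γ*(γ-1)))*(γ-1) + (3*γ-2)/γ^2 - (2*γ-1)/γ)/((γ-1)^2*γ^2)) * ((1 + γ * x / σ) ^ (-2/γ : ℝ) * Real.log (1 + γ * x / σ)) + ((((((γ-1)^2-(γ-1))/γ^2 + (γ-1)/γ)/((γ-1)^2*γ^2))) * ((1 + γ * x / σ) ^ (-2/γ-1 : ℝ) * Real.log (1 + γ * x / σ)) + (((-(γ-1)/γ^2)/((γ-1)^2*γ^2)) * ((1 + γ * x / σ) ^ (-2/γ : ℝ) * Real.log (1 + γ * x / σ) ^ 2)))))) (volume.restrict (Set.Ioi 0)) := i3.add s4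
    have s2 : Integrable (fun x => (((2*γ-1)*(-2*(2*γ-1)/(γ*(γ-1)) - 1/γ^2) + 3*γ*(1/γ))/((γ-1)^2*γ^2)) * (1 + γ * x / σ) ^ (-2/γ : ℝ) + ((((γ-1)^2*(-2*(2*γ-1)/(γ*(γ-1))) + (2*γ-1-(γ-1)^2)*(1/γ^2) + (2*γ^2-3*γ)*(1/γ))/((γ-1)^2*γ^2)) * (1 + γ * x / σ) ^ (-2/γ-1 : ℝ) + ((((γ-1)^2/γ^2)/((γ-1)^2*γ^2)) * (1 + γ * x / σ) ^ (-2/γ-2 : ℝ) + (((-(-2*(2*γ-1)/(γ*(γ-1)))*(γ-1) + (3*γ-2)/γ^2 - (2*γ-1)/γ)/((γ-1)^2*γ^2)) * ((1 + γ * x / σ) ^ (-2/γ : ℝ) * Real.log (1 + γ * x / σ)) + ((((((γ-1)^2-(γ-1))/γ^2 + (γ-1)/γ)/((γ-1)^2*γ^2))) * ((1 + γ * x / σ) ^ (-2/γ-1 : ℝ) * Real.log (1 + γ * x / σ)) + (((-(γ-1)/γ^2)/((γ-1)^2*γ^2)) * ((1 + γ * x / σ) ^ (-2/γ : ℝ)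 * Real.log (1 + γ * x / σ) ^ 2))))))) (volume.restrict (Set.Ioi 0)) := i2.add s3
    rw [integral_add i1 s2,
      integral_add i2 s3,
      integral_add i3 s4,
      integral_add i4 s5,
      integral_add i5 s6,
      integral_add i6 i7]
    simp only [integral_const_mul]
    rw [Jv, J2, J1, J0, J2L, J1L, J2L2]
    field_simp
    ring
  · -- part 2
    rw [setIntegral_congr_fun measurableSet_Ioi (fun x hx => key2 hγ0 hγ1 hσ hx)]
    have i1 := Iv.const_mul (((1/(2*(γ-2)^2) - 1/(γ-1)^2)/σ))
    have i2 := I2.const_mul ((((2*γ-1)/γ + (γ-1))/(σ*(γ-1)^2*γ^2)))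
    have i3 := I1.const_mul ((((γ^2-4*γ+2)/γ + (γ^2-γ+1))/(σ*(γ-1)^2*γ^2)))
    have i4 := I0.const_mul (((-(γ-1)^2/γ)/(σ*(γ-1)^2*γ^2)))
    have i5 := I2L.const_mul (((-(γ-1)/γ)/(σ*(γ-1)^2*γ^2)))
    have i6 := I1L.const_mul (((-(γ-1)^2/γ)/(σ*(γ-1)^2*γ^2)))
    have s5 : Integrable (fun x => ((-(γ-1)/γ)/(σ*(γ-1)^2*γ^2)) * ((1 + γ * x / σ) ^ (-2/γ : ℝ) * Real.log (1 + γ * x / σ)) + (((-(γ-1)^2/γ)/(σ*(γ-1)^2*γ^2)) * ((1 + γ * x / σ) ^ (-2/γ-1 : ℝ) * Real.log (1 + γ * x / σ)))) (volume.restrict (Set.Ioi 0)) := i5.add i6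
    have s4 : Integrable (fun x => ((-(γ-1)^2/γ)/(σ*(γ-1)^2*γ^2)) * (1 + γ * x / σ) ^ (-2/γ-2 : ℝ) + (((-(γ-1)/γ)/(σ*(γ-1)^2*γ^2)) * ((1 + γ * x / σ) ^ (-2/γ : ℝ) * Real.log (1 + γ * x / σ)) + (((-(γ-1)^2/γ)/(σ*(γ-1)^2*γ^2)) * ((1 + γ * x / σ) ^ (-2/γ-1 : ℝ) * Real.log (1 + γ * x / σ))))) (volume.restrict (Set.Ioi 0)) := i4.add s5
    have s3 : Integrable (fun x => (((γ^2-4*γ+2)/γ + (γ^2-γ+1))/(σ*(γ-1)^2*γ^2)) * (1 + γ * x / σ) ^ (-2/γ-1 : ℝ) + (((-(γ-1)^2/γ)/(σ*(γ-1)^2*γ^2)) * (1 + γ * x / σ) ^ (-2/γ-2 : ℝ) + (((-(γ-1)/γ)/(σ*(γ-1)^2*γ^2)) * ((1 + γ * x / σ) ^ (-2/γ : ℝ) * Real.log (1 + γ * x / σ)) + (((-(γ-1)^2/γ)/(σ*(γ-1)^2*γ^2)) * ((1 + γ * x / σ) ^ (-2/γ-1 : ℝ) * Real.log (1 + γ *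 x / σ)))))) (volume.restrict (Set.Ioi 0)) := i3.add s4
    have s2 : Integrable (fun x => (((2*γ-1)/γ + (γ-1))/(σ*(γ-1)^2*γ^2)) * (1 + γ * x / σ) ^ (-2/γ : ℝ) + ((((γ^2-4*γ+2)/γ + (γ^2-γ+1))/(σ*(γ-1)^2*γ^2)) * (1 + γ * x / σ) ^ (-2/γ-1 : ℝ) + (((-(γ-1)^2/γ)/(σ*(γ-1)^2*γ^2)) * (1 + γ * x / σ) ^ (-2/γ-2 : ℝ) + (((-(γ-1)/γ)/(σ*(γ-1)^2*γ^2)) * ((1 + γ * x / σ) ^ (-2/γ : ℝ) * Real.log (1 + γ * x / σ)) + (((-(γ-1)^2/γ)/(σ*(γ-1)^2*γ^2)) * ((1 + γ * x / σ) ^ (-2/γ-1 : ℝ) * Real.log (1 + γ * x / σ))))))) (volume.restrict (Set.Ioi 0)) := i2.add s3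
    rw [integral_add i1 s2,
      integral_add i2 s3,
      integral_add i3 s4,
      integral_add i4 s5,
      integral_add i5 i6]
    simp only [integral_const_mul]
    rw [Jv, J2, J1, J0, J2L, J1L]
    field_simp
    ring
  · -- part 3
    rw [setIntegral_congr_fun measurableSet_Ioi (fun x hx => key3 hγ0 hγ1 hσ hx)]
    have i1 := Iv.const_mul (((1/(2*(γ-2)^2) - 1/(γ-1)^2)/σ))
    have i2 := I2.const_mul ((1/(σ*(γ-1)^2*γ) + 1/(σ*(γ-1)*γ^3)))
    have i3 := I1.const_mul (((γ-1)/(σ*(γ-1)^2*γ) + (γ-2)/(σ*(γ-1)*γ^3)))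
    have i4 := I0.const_mul ((-((γ-1)/(σ*(γ-1)*γ^3))))
    have i5 := I2L.const_mul ((-(1/(σ*(γ-1)*γ^3))))
    have i6 := I1L.const_mul ((-((γ-1)/(σ*(γ-1)*γ^3))))
    have s5 : Integrable (fun x => (-(1/(σ*(γ-1)*γ^3))) * ((1 + γ * x / σ) ^ (-2/γ : ℝ) * Real.log (1 + γ * x / σ)) + ((-((γ-1)/(σ*(γ-1)*γ^3))) * ((1 + γ * x / σ) ^ (-2/γ-1 : ℝ) * Real.log (1 + γ * x / σ)))) (volume.restrict (Set.Ioi 0)) := i5.add i6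
    have s4 : Integrable (fun x => (-((γ-1)/(σ*(γ-1)*γ^3))) * (1 + γ * x / σ) ^ (-2/γ-2 : ℝ) + ((-(1/(σ*(γ-1)*γ^3))) * ((1 + γ * x / σ) ^ (-2/γ : ℝ) * Real.log (1 + γ * x / σ)) + ((-((γ-1)/(σ*(γ-1)*γ^3))) * ((1 + γ * x / σ) ^ (-2/γ-1 : ℝ) * Real.log (1 + γ * x / σ))))) (volume.restrict (Set.Ioi 0)) := i4.add s5
    have s3 : Integrable (fun x => ((γ-1)/(σ*(γ-1)^2*γ) + (γ-2)/(σ*(γ-1)*γ^3)) * (1 + γ * x / σ) ^ (-2/γ-1 : ℝ) + ((-((γ-1)/(σ*(γ-1)*γ^3))) * (1 + γ * x / σ) ^ (-2/γ-2 : ℝ) + ((-(1/(σ*(γ-1)*γ^3))) * ((1 + γ * x / σ) ^ (-2/γ : ℝ) * Real.log (1 + γ * x / σ)) + ((-((γ-1)/(σ*(γ-1)*γ^3))) * ((1 + γ * x / σ) ^ (-2/γ-1 : ℝ) * Real.log (1 + γ * x / σ)))))) (volume.restrict (Set.Ioi 0)) := i3.add s4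
    have s2 : Integrable (fun x => (1/(σ*(γ-1)^2*γ) + 1/(σ*(γ-1)*γ^3)) * (1 + γ * x / σ) ^ (-2/γ : ℝ) + (((γ-1)/(σ*(γ-1)^2*γ) + (γ-2)/(σ*(γ-1)*γ^3)) * (1 + γ * x / σ) ^ (-2/γ-1 : ℝ) + ((-((γ-1)/(σ*(γ-1)*γ^3))) * (1 + γ * x / σ) ^ (-2/γ-2 : ℝ) + ((-(1/(σ*(γ-1)*γ^3))) * ((1 + γ * x / σ) ^ (-2/γ : ℝ) * Real.log (1 + γ * x / σ)) + ((-((γ-1)/(σ*(γ-1)*γ^3))) * ((1 + γ * x / σ) ^ (-2/γ-1 : ℝ) * Real.log (1 + γ * x / σ))))))) (volume.restrict (Set.Ioi 0)) := i2.add s3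
    rw [integral_add i1 s2,
      integral_add i2 s3,
      integral_add i3 s4,
      integral_add i4 s5,
      integral_add i5 i6]
    simp only [integral_const_mul]
    rw [Jv, J2, J1, J0, J2L, J1L]
    field_simp
    ring
  · -- part 4
    rw [setIntegral_congr_fun measurableSet_Ioi (fun x hx => key4 hγ0 hγ1 hσ hx)]
    have i1 := I2.const_mul ((1/(σ^2*γ^2)))
    have i2 := I1.const_mul ((-2/(σ^2*γ^2)))
    have i3 := I0.const_mul ((1/(σ^2*γ^2)))
    have s2 : Integrable (fun x => (-2/(σ^2*γ^2)) * (1 + γ * x / σ) ^ (-2/γ-1 : ℝ) + ((1/(σ^2*γ^2)) * (1 + γ * x / σ) ^ (-2/γ-2 : ℝ))) (volume.restrict (Set.Ioi 0)) := i2.add i3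
    rw [integral_add i1 s2,
      integral_add i2 i3]
    simp only [integral_const_mul]
    rw [J2, J1, J0]
    have h4 : (4:ℝ) - γ ^ 2 ≠ 0 := by nlinarith
    have h4' : σ * (4 - γ ^ 2) ≠ 0 := mul_ne_zero hσ' h4
    field_simp
    ring
end
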